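/- arXiv:0802.0630 — 6 statements merged into one kernel-verified Lean document; each statement's English description precedes it below -/
import Mathlib

section
/- Nagata's map N = (X − 2YΔ − ZΔ², Y + ZΔ, Z), where Δ = XZ + Y², is a polynomial automorphism of K³ with inverse (X + 2YΔ − ZΔ², Y − ZΔ, Z), for any commutative ring K. -/
open MvPolynomial

/-- Nagata's map (X − 2YΔ − ZΔ², Y + ZΔ, Z), Δ = XZ + Y², is a polynomial automorphism
with inverse (X + 2YΔ − ZΔ², Y − ZΔ, Z). -/
theorem stmt_7 (K : Type) [CommRing K] :
    let Δ : MvPolynomial (Fin 3) K := X 0 * X 2 + X 1 ^ 2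
    let N : Fin 3 → MvPolynomial (Fin 3) K :=
      ![X 0 - 2 * X 1 * Δ - X 2 * Δ ^ 2, X 1 + X 2 * Δ, X 2]
    let M : Fin 3 → MvPolynomial (Fin 3) K :=
      ![X 0 + 2 * X 1 * Δ - X 2 * Δ ^ 2, X 1 - X 2 * Δ, X 2]
    (∀ i, aeval M (N i) = X i) ∧ (∀ i, aeval N (M i) = X i) := by
  intro Δ N M
  constructor <;> intro i <;> fin_cases i <;>
    simp [N, M, Δ, Fin.isValue, Matrix.cons_val_zero, Matrix.cons_val_one, Matrix.head_cons, Matrix.cons_val_two, Matrix.tail_cons, map_ofNat] <;>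
    ring
end

section
/- Over 𝔽_q with q = 2^m, m ≥ 2, every invertible linear map A ∈ GL_n(𝔽_q) induces an even permutation of 𝔽_qⁿ. -/
open MvPolynomial

set_option linter.unusedSectionVars false

section Aux

variable {K : Type} [Field K] [DecidableEq K] {ι : Type} [DecidableEq ι] [Fintype ι]

/-- Permutation of `ι → K` induced by the transvection `1 + c E_{ij}`. -/
def tvPerm (i j : ι) (h : i ≠ j) (c : K) : Equiv.Perm (ι → K) where
  toFun v := v + Pi.single i (c * v j)
  invFun v := v + Pi.single i (-(c * v j))
  left_inv := by
    intro v
    have hj : (Pi.single i (c * v j) : ι → K) j = 0 := Pi.single_eq_of_ne (Ne.symm h) _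
    simp only [Pi.add_apply, hj, add_zero, add_assoc, ← Pi.single_add]
    simp
  right_inv := by
    intro v
    have hj : (Pi.single i (-(c * v j)) : ι → K) j = 0 := Pi.single_eq_of_ne (Ne.symm h) _
    simp only [Pi.add_apply, hj, add_zero, add_assoc, ← Pi.single_add]
    simp

lemma tvPerm_mulVec (i j : ι) (h : i ≠ j) (c : K) (v : ι → K) :
    tvPerm i j h c v = (Matrix.transvection i j c).mulVec v := by
  funext k
  simp only [tvPerm, Equiv.coe_fn_mk, Matrix.transvection, Matrix.add_mulVec, Matrix.one_mulVec,
    Pi.add_apply]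
  congr 1
  simp only [Matrix.mulVec, dotProduct, Matrix.single]
  by_cases hk : k = i
  · subst hk
    simp [Finset.sum_ite_eq, Pi.single_eq_same]
  · rw [Pi.single_eq_of_ne hk]
    symm
    apply Finset.sum_eq_zero
    intro l _
    have : ¬(i = k ∧ j = l) := fun hc => hk hc.1.symm
    simp [Matrix.of_apply, this]

lemma tvPerm_mul (i j : ι) (h : i ≠ j) (c c' : K) :
    tvPerm i j h c * tvPerm i j h c' = tvPerm i j h (c + c') := by
  ext v k
  have hj : (Pi.single i (c' * v j) : ι → K) j = 0 := Pi.single_eq_of_ne (Ne.symm h) _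
  simp only [tvPerm, Equiv.Perm.coe_mul, Function.comp_apply, Equiv.coe_fn_mk, Pi.add_apply, hj,
    add_zero, add_mul, Pi.single_add]
  abel

lemma tvPerm_zero (i j : ι) (h : i ≠ j) : tvPerm i j h (0 : K) = 1 := by
  ext v k
  simp [tvPerm]

/-- Permutation of `ι → K` induced by an invertible diagonal matrix. -/
def dgPerm (d : ι → K) (hd : ∀ k, d k ≠ 0) : Equiv.Perm (ι → K) :=
  Equiv.piCongrRight fun k => Equiv.mulLeft₀ (d k) (hd k)

lemma dgPerm_apply (d : ι → K) (hd : ∀ k, d k ≠ 0) (v : ι → K) (k : ι) :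
    dgPerm d hd v k = d k * v k := rfl

lemma dgPerm_mulVec (d : ι → K) (hd : ∀ k, d k ≠ 0) (v : ι → K) :
    dgPerm d hd v = (Matrix.diagonal d).mulVec v := by
  funext k
  rw [dgPerm_apply, Matrix.mulVec_diagonal]

lemma dgPerm_pow (d : ι → K) (hd : ∀ k, d k ≠ 0) (t : ℕ) (v : ι → K) (k : ι) :
    ((dgPerm d hd) ^ t) v k = d k ^ t * v k := by
  induction t generalizing v with
  | zero => simp
  | succ t ih =>
    rw [pow_succ, Equiv.Perm.mul_apply, ih, dgPerm_apply, pow_succ]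
    ring

lemma dg_conj_tv (d : ι → K) (hd : ∀ k, d k ≠ 0) (i j : ι) (h : i ≠ j) (c : K) :
    dgPerm d hd * tvPerm i j h c * (dgPerm d hd)⁻¹ =
      tvPerm i j h (d i * c * (d j)⁻¹) := by
  ext v k
  have hw : ∀ (u : ι → K) (l : ι), (dgPerm d hd)⁻¹ u l = (d l)⁻¹ * u l := fun _ _ => rfl
  have hv : ∀ (u : ι → K) (l : ι), dgPerm d hd u l = d l * u l := fun _ _ => rfl
  simp only [Equiv.Perm.coe_mul, Function.comp_apply]
  rw [hv]
  by_cases hk : k = i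
  · subst hk
    simp only [tvPerm, Equiv.coe_fn_mk, Pi.add_apply, Pi.single_eq_same, hw]
    rw [mul_add, ← mul_assoc, mul_inv_cancel₀ (hd k), one_mul]
    ring
  · simp only [tvPerm, Equiv.coe_fn_mk, Pi.add_apply, Pi.single_eq_of_ne hk, add_zero, hw]
    rw [← mul_assoc, mul_inv_cancel₀ (hd k), one_mul]

lemma int_units_eq_one {u : ℤˣ} {t : ℕ} (ht : Odd t) (h : u ^ t = 1) : u = 1 := by
  obtain ⟨s, hs⟩ := ht
  have h2 : u ^ 2 = 1 := Int.units_sq u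
  rw [← h, hs, pow_add, pow_mul, h2, one_pow, pow_one, one_mul]

lemma sign_tvPerm_eq [Fintype K] (i j : ι) (h : i ≠ j) {c c' : K} (hc : c ≠ 0) (hc' : c' ≠ 0) :
    Equiv.Perm.sign (tvPerm i j h c) = Equiv.Perm.sign (tvPerm i j h c') := by
  set d : ι → K := fun k => if k = i then c' / c else 1 with hdd
  have hd : ∀ k, d k ≠ 0 := by
    intro k
    by_cases hk : k = i <;> simp [hdd, hk, div_ne_zero hc' hc]
  have hdi : d i = c' / c := if_pos rfl
  have hdj : d j = 1 := if_neg fun e => h e.symm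
  have key := dg_conj_tv d hd i j h c
  rw [hdi, hdj] at key
  have hcc : c' / c * c * (1 : K)⁻¹ = c' := by field_simp
  rw [hcc] at key
  rw [← key, map_mul, map_mul, map_inv, mul_comm (Equiv.Perm.sign (dgPerm d hd)), mul_assoc]
  simp

lemma sign_tvPerm [Fintype K] (hK : 2 < Fintype.card K) (i j : ι) (h : i ≠ j) (c : K) :
    Equiv.Perm.sign (tvPerm i j h c) = 1 := by
  by_cases hc : c = 0
  · rw [hc, tvPerm_zero, map_one]
  · obtain ⟨b, hb0, hb1⟩ : ∃ b : K, b ≠ 0 ∧ b ≠ -1 := by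
      by_contra hcon
      push_neg at hcon
      have hsub : (Finset.univ : Finset K) ⊆ {0, -1} := by
        intro x _
        rcases eq_or_ne x 0 with h0 | h0
        · simp [h0]
        · simp [hcon x h0]
      have hle := Finset.card_le_card hsub
      have h2 : ({0, -1} : Finset K).card ≤ 2 := Finset.card_insert_le _ _ |>.trans (by simp)
      rw [Finset.card_univ] at hle
      omega
    have hb1' : (1 : K) + b ≠ 0 := by
      intro hb
      exact hb1 (by linear_combination hb)
    have e1 : Equiv.Perm.sign (tvPerm i j h (1 : K)) * Equiv.Perm.sign (tvPerm i j h b) =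
        Equiv.Perm.sign (tvPerm i j h (1 + b)) := by
      rw [← map_mul, tvPerm_mul]
    have e2 := sign_tvPerm_eq i j h hb0 (one_ne_zero (α := K))
    have e3 := sign_tvPerm_eq i j h hb1' (one_ne_zero (α := K))
    rw [e2, e3] at e1
    have hone : Equiv.Perm.sign (tvPerm i j h (1 : K)) = 1 :=
      mul_left_cancel (a := Equiv.Perm.sign (tvPerm i j h (1 : K)))
        (by rw [mul_one]; exact e1)
    rw [sign_tvPerm_eq i j h hc (one_ne_zero (α := K)), hone]

lemma sign_dgPerm [Fintype K] (hodd : Odd (Fintype.card K - 1)) (d : ι → K)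
    (hd : ∀ k, d k ≠ 0) : Equiv.Perm.sign (dgPerm d hd) = 1 := by
  have hp : (dgPerm d hd) ^ (Fintype.card K - 1) = 1 := by
    apply Equiv.ext
    intro v
    funext k
    rw [Equiv.Perm.one_apply, dgPerm_pow, FiniteField.pow_card_sub_one_eq_one (d k) (hd k),
      one_mul]
  have := congrArg Equiv.Perm.sign hp
  rw [map_pow, map_one] at this
  exact int_units_eq_one hodd this

end Aux

/-- Over 𝔽_q with q = 2^m, m ≥ 2, every invertible linear map induces an even
permutation of 𝔽_qⁿ. -/
theorem stmt_11 (K : Type) [Field K] [Fintype K] [DecidableEq K] (m : ℕ) (hm : 2 ≤ m)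
    (hq : Fintype.card K = 2 ^ m) (n : ℕ) (A : GL (Fin n) K) :
    ∃ σ : Equiv.Perm (Fin n → K),
      (∀ v, σ v = (A : Matrix (Fin n) (Fin n) K).mulVec v) ∧ Equiv.Perm.sign σ = 1 := by
  have hcard : 2 < Fintype.card K := by
    rw [hq]
    calc 2 < 2 ^ 2 := by norm_num
    _ ≤ 2 ^ m := Nat.pow_le_pow_right (by norm_num) hm
  have heven : Even (Fintype.card K) := by
    rw [hq]
    exact (Nat.even_pow).mpr ⟨even_two, by omega⟩
  have hodd : Odd (Fintype.card K - 1) :=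
    Nat.Even.sub_odd (by omega) heven odd_one
  have hu : IsUnit (A : Matrix (Fin n) (Fin n) K) := ⟨A, rfl⟩
  have hdet : ((A : Matrix (Fin n) (Fin n) K)).det ≠ 0 :=
    ((Matrix.isUnit_iff_isUnit_det _).mp hu).ne_zero
  apply Matrix.diagonal_transvection_induction_of_det_ne_zero
    (fun M => ∃ σ : Equiv.Perm (Fin n → K),
      (∀ v, σ v = M.mulVec v) ∧ Equiv.Perm.sign σ = 1) _ hdet
  · intro D hD
    rw [Matrix.det_diagonal] at hD
    have hd : ∀ k, D k ≠ 0 := fun k h0 =>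
      hD (Finset.prod_eq_zero (Finset.mem_univ k) h0)
    exact ⟨dgPerm D hd, fun v => dgPerm_mulVec D hd v, sign_dgPerm hodd D hd⟩
  · intro t
    obtain ⟨i, j, hij, c⟩ := t
    rw [Matrix.TransvectionStruct.toMatrix_mk]
    exact ⟨tvPerm i j hij c, fun v => tvPerm_mulVec i j hij c v,
      sign_tvPerm hcard i j hij c⟩
  · rintro M N _ _ ⟨σ, hσ, hs⟩ ⟨τ, hτ, ht⟩
    refine ⟨σ * τ, fun v => ?_, by rw [map_mul, hs, ht, mul_one]⟩
    rw [Equiv.Perm.mul_apply, hτ, hσ, Matrix.mulVec_mulVec]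
end

section
/- Over 𝔽_q with q = 2^m, m ≥ 2, every elementary polynomial automorphism (X₁ + f(X₂,…,Xₙ), X₂, …, Xₙ), with n ≥ 2 and f ∈ 𝔽_q[X₂,…,Xₙ], induces an even permutation of 𝔽_qⁿ. -/
open MvPolynomial

section aux

variable {K : Type} [Field K] [Fintype K] [DecidableEq K] {n : ℕ}

/-- The elementary permutation attached to a function `F` not depending on
coordinate `0`, over a field of characteristic 2 (it is an involution). -/
def elemPerm (F : (Fin (n + 2) → K) → K)
    (hF : ∀ v x, F (Function.update v 0 x) = F v)
    (h2 : ∀ a : K, a + a = 0) : Equiv.Perm (Fin (n + 2) → K) where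
  toFun v := Function.update v 0 (v 0 + F v)
  invFun v := Function.update v 0 (v 0 + F v)
  left_inv v := by
    ext i
    by_cases hi : i = 0
    · subst hi
      simp [Function.update_self, Function.update_idem, hF, add_assoc, h2]
    · simp [Function.update_of_ne hi]
  right_inv v := by
    ext i
    by_cases hi : i = 0
    · subst hi
      simp [Function.update_self, Function.update_idem, hF, add_assoc, h2]
    · simp [Function.update_of_ne hi]

lemma elemPerm_apply (F : (Fin (n + 2) → K) → K)
    (hF : ∀ v x, F (Function.update v 0 x) = F v)
    (h2 : ∀ a : K, a + a = 0) (v : Fin (n + 2) → K) :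
    elemPerm F hF h2 v = Function.update v 0 (v 0 + F v) := rfl

lemma elemPerm_congr {F G : (Fin (n + 2) → K) → K} (h : F = G)
    (hF : ∀ v x, F (Function.update v 0 x) = F v)
    (hG : ∀ v x, G (Function.update v 0 x) = G v)
    (h2 : ∀ a : K, a + a = 0) : elemPerm F hF h2 = elemPerm G hG h2 := by
  subst h; rfl

lemma elemPerm_mul (F G : (Fin (n + 2) → K) → K)
    (hF : ∀ v x, F (Function.update v 0 x) = F v)
    (hG : ∀ v x, G (Function.update v 0 x) = G v)
    (h2 : ∀ a : K, a + a = 0) :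
    elemPerm F hF h2 * elemPerm G hG h2
      = elemPerm (F + G) (fun v x => by simp [Pi.add_apply, hF, hG]) h2 := by
  ext v i
  simp only [Equiv.Perm.mul_apply, elemPerm_apply, Pi.add_apply]
  by_cases hi : i = 0
  · subst hi
    simp [Function.update_self, Function.update_idem, hF]
    ring
  · simp [Function.update_of_ne hi]

/-- Scaling coordinate 0 by a nonzero constant. -/
def scalePerm (a : K) (ha : a ≠ 0) : Equiv.Perm (Fin (n + 2) → K) where
  toFun v := Function.update v 0 (a * v 0)
  invFun v := Function.update v 0 (a⁻¹ * v 0)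
  left_inv v := by
    ext i
    by_cases hi : i = 0
    · subst hi
      simp [Function.update_self, Function.update_idem, inv_mul_cancel_left₀ ha]
    · simp [Function.update_of_ne hi]
  right_inv v := by
    ext i
    by_cases hi : i = 0
    · subst hi
      simp [Function.update_self, Function.update_idem, mul_inv_cancel_left₀ ha]
    · simp [Function.update_of_ne hi]

lemma scale_conj (F : (Fin (n + 2) → K) → K)
    (hF : ∀ v x, F (Function.update v 0 x) = F v)
    (h2 : ∀ a : K, a + a = 0) (a : K) (ha : a ≠ 0) :
    scalePerm a ha * elemPerm F hF h2 * (scalePerm a ha)⁻¹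
      = elemPerm (fun v => a * F v) (fun v x => by simp only [hF]) h2 := by
  ext v i
  have hinv : (scalePerm a ha)⁻¹ v = Function.update v 0 (a⁻¹ * v 0) := rfl
  simp only [Equiv.Perm.mul_apply, elemPerm_apply, hinv]
  by_cases hi : i = 0
  · subst hi
    simp [scalePerm, Function.update_self, Function.update_idem, hF,
      mul_add, mul_inv_cancel_left₀ ha]
  · simp [scalePerm, Function.update_of_ne hi]

lemma sign_elemPerm_smul (F : (Fin (n + 2) → K) → K)
    (hF : ∀ v x, F (Function.update v 0 x) = F v)
    (h2 : ∀ a : K, a + a = 0) (a : K) (ha : a ≠ 0) :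
    Equiv.Perm.sign (elemPerm (fun v => a * F v) (fun v x => by simp only [hF]) h2)
      = Equiv.Perm.sign (elemPerm F hF h2) := by
  rw [← scale_conj F hF h2 a ha, map_mul, map_mul, map_inv, mul_comm,
    inv_mul_cancel_left]

end aux

/-- Over 𝔽_q with q = 2^m, m ≥ 2, every elementary automorphism
(X₁ + f(X₂,…,Xₙ), X₂, …, Xₙ) (n ≥ 2) induces an even permutation of 𝔽_qⁿ. -/
theorem stmt_12 (K : Type) [Field K] [Fintype K] [DecidableEq K] (m : ℕ) (hm : 2 ≤ m)
    (hq : Fintype.card K = 2 ^ m) (n : ℕ)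
    (f : MvPolynomial (Fin (n + 2)) K) (hf : (0 : Fin (n + 2)) ∉ f.vars) :
    ∃ σ : Equiv.Perm (Fin (n + 2) → K),
      (∀ v i, σ v i = if i = 0 then v 0 + eval v f else v i) ∧ Equiv.Perm.sign σ = 1 := by
  -- characteristic 2
  have hchar : ∀ a : K, a + a = 0 := by
    obtain ⟨p, hp⟩ := CharP.exists K
    haveI := hp
    obtain ⟨k, hpp, hcard⟩ := FiniteField.card K p
    have hdvd : p ∣ 2 ^ m := by
      rw [← hq, hcard]
      exact dvd_pow_self p k.2.ne'
    have hp2 : p = 2 := by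
      have h2 : p ∣ 2 := hpp.dvd_of_dvd_pow hdvd
      exact (Nat.prime_dvd_prime_iff_eq hpp Nat.prime_two).mp h2
    intro a
    have h20 : (2 : K) = 0 := by
      have := CharP.cast_eq_zero K p
      rwa [hp2] at this
      
    calc a + a = 2 * a := by ring
    _ = 0 := by rw [h20, zero_mul]
  -- F does not depend on coordinate 0
  set F : (Fin (n + 2) → K) → K := fun v => eval v f with hFdef
  have hF : ∀ (v : Fin (n + 2) → K) x, F (Function.update v 0 x) = F v := by
    intro v x
    refine eval₂Hom_congr' rfl ?_ rfl
    intro i hi _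
    have : i ≠ 0 := fun h => hf (h ▸ hi)
    simp [Function.update_of_ne this]
  refine ⟨elemPerm F hF hchar, ?_, ?_⟩
  · intro v i
    rw [elemPerm_apply, Function.update_apply]
  · -- sign computation
    obtain ⟨c, hc⟩ : ∃ c : K, c ∉ ({0, 1} : Finset K) := by
      by_contra h
      push_neg at h
      have hsub : (Finset.univ : Finset K) ⊆ {0, 1} := fun x _ => h x
      have h1 := Finset.card_le_card hsub
      have h2 : ({0, 1} : Finset K).card ≤ 2 :=
        (Finset.card_insert_le _ _).trans (by simp)
      rw [Finset.card_univ, hq] at h1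
      have h4 : 2 ^ 2 ≤ 2 ^ m := Nat.pow_le_pow_right (by norm_num) hm
      omega
    simp only [Finset.mem_insert, Finset.mem_singleton, not_or] at hc
    obtain ⟨hc0, hc1⟩ := hc
    have hc1' : 1 + c ≠ 0 := by
      intro h
      apply hc1
      have := hchar 1
      -- 1 + c = 0 and 1 + 1 = 0 imply c = 1
      have : c = c + (1 + 1) := by rw [this, add_zero]
      rw [show c + (1 + 1) = (1 + c) + 1 by ring, h, zero_add] at this
      exact this
    set s := Equiv.Perm.sign (elemPerm F hF hchar) with hs
    have key : ∀ (a : K), a ≠ 0 →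
        Equiv.Perm.sign (elemPerm (fun v => a * F v)
          (fun v x => by simp only [hF]) hchar) = s :=
      fun a ha => sign_elemPerm_smul F hF hchar a ha
    have hmul : elemPerm (fun v => (1 + c) * F v) (fun v x => by simp only [hF]) hchar
        = elemPerm (fun v => 1 * F v) (fun v x => by simp only [hF]) hchar
          * elemPerm (fun v => c * F v) (fun v x => by simp only [hF]) hchar := by
      rw [elemPerm_mul]
      apply elemPerm_congr
      ext v
      simp [Pi.add_apply]
      ring
    have e1 : s = s * s := by
      have h1 := key (1 + c) hc1'
      have h2 := key 1 one_ne_zero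
      have h3 := key c hc0
      rw [hmul, map_mul, h2, h3] at h1
      exact h1.symm
    have : s * s = 1 := Int.units_mul_self s
    rw [← e1] at this
    exact this
end

section
/- Over 𝔽_q with q = 2^m, m ≥ 2, every tame polynomial automorphism of 𝔽_qⁿ (n ≥ 2) induces an even permutation of 𝔽_qⁿ; i.e., ε(TAₙ(𝔽_q)) ⊆ Alt(𝔽_qⁿ). -/
open MvPolynomial

/-- The tame subgroup of polynomial automorphisms: generated by invertible linear maps
and elementary automorphisms (closed under composition; generators include their inverses). -/
inductive IsTame (K : Type) [Field K] (n : ℕ) : (Fin n → MvPolynomial (Fin n) K) → Prop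
  | linear (A : GL (Fin n) K) :
      IsTame K n (fun i => ∑ j, MvPolynomial.C ((A : Matrix (Fin n) (Fin n) K) i j) * MvPolynomial.X j)
  | elementary (i : Fin n) (f : MvPolynomial (Fin n) K) (hf : i ∉ f.vars) :
      IsTame K n (Function.update MvPolynomial.X i (MvPolynomial.X i + f))
  | comp {F G : Fin n → MvPolynomial (Fin n) K} :
      IsTame K n F → IsTame K n G → IsTame K n (fun i => MvPolynomial.aeval G (F i))

set_option linter.unusedSectionVars false
set_option linter.unusedTactic false

namespace Stmt13Aux

variable {K : Type} [Field K] [Fintype K] [DecidableEq K] {n : ℕ}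

lemma eval_update_of_not_mem_vars {i : Fin n} {f : MvPolynomial (Fin n) K}
    (hf : i ∉ f.vars) (v : Fin n → K) (x : K) :
    eval (Function.update v i x) f = eval v f := by
  show eval₂Hom (RingHom.id K) _ f = eval₂Hom (RingHom.id K) _ f
  refine eval₂Hom_congr' rfl (fun j hj _ => ?_) rfl
  exact Function.update_of_ne (by rintro rfl; exact hf hj) _ _

/-- The map underlying an elementary automorphism. -/
noncomputable def elemMap (i : Fin n) (f : MvPolynomial (Fin n) K) : (Fin n → K) → (Fin n → K) :=
  fun v => Function.update v i (v i + eval v f)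

lemma elemMap_comp {i : Fin n} {f : MvPolynomial (Fin n) K} (hf : i ∉ f.vars)
    (g : MvPolynomial (Fin n) K) (v : Fin n → K) :
    elemMap i f (elemMap i g v) = elemMap i (f + g) v := by
  simp only [elemMap, Function.update_idem, Function.update_self,
    eval_update_of_not_mem_vars hf, map_add]
  congr 1
  ring

/-- Elementary automorphism as a permutation (char 2 makes it an involution). -/
noncomputable def elemPerm (h2 : ∀ x : K, x + x = 0) (i : Fin n) (f : MvPolynomial (Fin n) K)
    (hf : i ∉ f.vars) : Equiv.Perm (Fin n → K) where
  toFun := elemMap i f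
  invFun := elemMap i f
  left_inv v := by rw [elemMap_comp hf]; simp [elemMap, map_add, h2 (eval v f)]
  right_inv v := by rw [elemMap_comp hf]; simp [elemMap, map_add, h2 (eval v f)]

/-- Scaling one coordinate by a unit. -/
def scalePerm (a : Kˣ) (i : Fin n) : Equiv.Perm (Fin n → K) where
  toFun v := Function.update v i ((a : K) * v i)
  invFun v := Function.update v i (((a⁻¹ : Kˣ) : K) * v i)
  left_inv v := by simp [Function.update_idem, Function.update_self]
  right_inv v := by simp [Function.update_idem, Function.update_self]

lemma not_mem_vars_C_mul {i : Fin n} {f : MvPolynomial (Fin n) K} (hf : i ∉ f.vars) (c : K) :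
    i ∉ (C c * f).vars := by
  intro hmem
  have h := vars_mul (C c) f hmem
  rw [Finset.mem_union, vars_C] at h
  rcases h with h | h
  · exact absurd h (Finset.notMem_empty i)
  · exact hf h

lemma scale_mul_elem (h2 : ∀ x : K, x + x = 0) (a : Kˣ) (i : Fin n)
    (f : MvPolynomial (Fin n) K) (hf : i ∉ f.vars) :
    scalePerm a i * elemPerm h2 i f hf
      = elemPerm h2 i (C (a : K) * f) (not_mem_vars_C_mul hf _) * scalePerm a i := by
  apply Equiv.ext
  intro v
  show Function.update (elemMap i f v) i ((a : K) * (elemMap i f v) i)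
      = elemMap i (C (a : K) * f) (Function.update v i ((a : K) * v i))
  simp only [elemMap, Function.update_idem, Function.update_self,
    eval_update_of_not_mem_vars (not_mem_vars_C_mul hf (a : K)), map_mul, eval_C]
  congr 1
  ring

lemma exists_ne_zero_ne_one (hcard : 2 < Fintype.card K) : ∃ a : K, a ≠ 0 ∧ a ≠ 1 := by
  by_contra h
  push_neg at h
  have hsub : (Finset.univ : Finset K) ⊆ {0, 1} := by
    intro x _
    by_cases hx : x = 0
    · simp [hx]
    · simp [h x hx]
  have hle := Finset.card_le_card hsub
  have h2 : ({0, 1} : Finset K).card ≤ 2 := by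
    apply le_trans (Finset.card_insert_le _ _); simp
  rw [Finset.card_univ] at hle
  omega

/-- Key lemma: in characteristic 2 with more than 2 elements, every elementary automorphism
induces an even permutation. The proof uses that conjugating by a coordinate scaling rescales
`f`, together with `E_f ∘ E_g = E_{f+g}`, to show the sign `s` satisfies `s = s * s`. -/
lemma sign_elemPerm (h2 : ∀ x : K, x + x = 0) (hcard : 2 < Fintype.card K)
    (i : Fin n) (f : MvPolynomial (Fin n) K) (hf : i ∉ f.vars) :
    Equiv.Perm.sign (elemPerm h2 i f hf) = 1 := by
  obtain ⟨a, ha0, ha1⟩ := exists_ne_zero_ne_one hcard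
  have hb0 : (1 : K) + a ≠ 0 := by
    intro hb
    apply ha1
    have h1 := h2 1
    linear_combination hb - h1
  have hconj : ∀ (c : K) (hc : c ≠ 0),
      Equiv.Perm.sign (elemPerm h2 i (C c * f) (not_mem_vars_C_mul hf c))
        = Equiv.Perm.sign (elemPerm h2 i f hf) := by
    intro c hc
    have := congrArg Equiv.Perm.sign (scale_mul_elem h2 (Units.mk0 c hc) i f hf)
    rw [map_mul, map_mul, mul_comm (Equiv.Perm.sign (scalePerm (Units.mk0 c hc) i))] at this
    exact (mul_right_cancel this).symm
  have hmulp : elemPerm h2 i (C ((1 : K) + a) * f) (not_mem_vars_C_mul hf _)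
      = elemPerm h2 i f hf * elemPerm h2 i (C a * f) (not_mem_vars_C_mul hf a) := by
    apply Equiv.ext
    intro v
    show elemMap i (C ((1 : K) + a) * f) v = elemMap i f (elemMap i (C a * f) v)
    rw [elemMap_comp hf]
    have : C ((1 : K) + a) * f = f + C a * f := by
      rw [map_add, C_1]; ring
    rw [this]
  have key := congrArg Equiv.Perm.sign hmulp
  rw [map_mul, hconj a ha0, hconj _ hb0] at key
  have : Equiv.Perm.sign (elemPerm h2 i f hf) * 1
      = Equiv.Perm.sign (elemPerm h2 i f hf) * Equiv.Perm.sign (elemPerm h2 i f hf) := by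
    rw [mul_one]; exact key
  exact (mul_left_cancel this).symm

/-- A diagonal invertible map as a permutation. -/
def diagPerm (D : Fin n → K) (hD : ∀ i, D i ≠ 0) : Equiv.Perm (Fin n → K) where
  toFun v := fun i => D i * v i
  invFun v := fun i => (D i)⁻¹ * v i
  left_inv v := by funext i; exact inv_mul_cancel_left₀ (hD i) _
  right_inv v := by funext i; exact mul_inv_cancel_left₀ (hD i) _

lemma diagPerm_pow (D : Fin n → K) (hD : ∀ i, D i ≠ 0) (k : ℕ) (v : Fin n → K) :
    (diagPerm D hD ^ k) v = fun i => D i ^ k * v i := by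
  induction k generalizing v with
  | zero => funext i; simp
  | succ k ih =>
    rw [pow_succ, Equiv.Perm.mul_apply, ih]
    funext i
    show D i ^ k * (D i * v i) = D i ^ (k + 1) * v i
    ring

/-- A diagonal permutation has odd order (dividing `q - 1`), hence is even. -/
lemma sign_diagPerm (hodd : Odd (Fintype.card K - 1)) (D : Fin n → K) (hD : ∀ i, D i ≠ 0) :
    Equiv.Perm.sign (diagPerm D hD) = 1 := by
  have hpow : diagPerm D hD ^ (Fintype.card K - 1) = 1 := by
    apply Equiv.ext
    intro v
    rw [diagPerm_pow]
    funext i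
    show D i ^ (Fintype.card K - 1) * v i = v i
    rw [FiniteField.pow_card_sub_one_eq_one (D i) (hD i), one_mul]
  have hsign := congrArg Equiv.Perm.sign hpow
  rw [map_pow, map_one] at hsign
  rcases Int.units_eq_one_or (Equiv.Perm.sign (diagPerm D hD)) with h | h
  · exact h
  · rw [h, hodd.neg_one_pow] at hsign
    exact absurd hsign (by decide)

lemma not_mem_vars_CX {i j : Fin n} (hij : i ≠ j) (c : K) : i ∉ (C c * X j).vars := by
  intro hmem
  have h := vars_mul (C c) (X j : MvPolynomial (Fin n) K) hmem
  rw [Finset.mem_union, vars_C] at h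
  rcases h with h | h
  · exact absurd h (Finset.notMem_empty i)
  · rw [vars_X] at h
    simp only [Finset.mem_singleton] at h
    exact hij h

lemma transvection_mulVec (t : Matrix.TransvectionStruct (Fin n) K) (v : Fin n → K) :
    t.toMatrix.mulVec v = elemMap t.i (C t.c * X t.j) v := by
  rcases t with ⟨i, j, hij, c⟩
  rw [Matrix.TransvectionStruct.toMatrix_mk, Matrix.transvection, Matrix.add_mulVec,
    Matrix.one_mulVec, Matrix.single_mulVec]
  funext k
  simp only [elemMap, Pi.add_apply, Function.update_apply, map_mul, eval_C, eval_X, Pi.zero_apply]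
  split_ifs with h
  · subst h; ring
  · ring

/-- Every invertible linear map induces an even permutation. -/
lemma sign_of_mulVec (h2 : ∀ x : K, x + x = 0) (hcard : 2 < Fintype.card K)
    (hodd : Odd (Fintype.card K - 1))
    (M : Matrix (Fin n) (Fin n) K) (hdet : M.det ≠ 0)
    (σ : Equiv.Perm (Fin n → K)) (hσ : ∀ v, σ v = M.mulVec v) :
    Equiv.Perm.sign σ = 1 := by
  refine Matrix.diagonal_transvection_induction
    (fun A => ∀ σ : Equiv.Perm (Fin n → K), (∀ v, σ v = A.mulVec v) → Equiv.Perm.sign σ = 1)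
    M ?_ ?_ ?_ σ hσ
  · -- diagonal matrices
    intro D hD σ hσ
    rw [Matrix.det_diagonal] at hD
    have hD0 : ∀ i, D i ≠ 0 := by
      intro i
      have : ∏ i, D i ≠ 0 := by rw [hD]; exact hdet
      exact Finset.prod_ne_zero_iff.mp this i (Finset.mem_univ i)
    have : σ = diagPerm D hD0 := by
      apply Equiv.ext
      intro v
      rw [hσ v]
      funext i
      rw [Matrix.mulVec_diagonal]
      rfl
    rw [this]
    exact sign_diagPerm hodd D hD0
  · -- transvections
    intro t σ hσ
    have : σ = elemPerm h2 t.i (C t.c * X t.j) (not_mem_vars_CX t.hij t.c) := by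
      apply Equiv.ext
      intro v
      rw [hσ v, transvection_mulVec]
      rfl
    rw [this]
    exact sign_elemPerm h2 hcard _ _ _
  · -- products
    intro A B hA hB σ hσ
    have hfun : ⇑σ = A.mulVec ∘ B.mulVec := by
      funext v
      rw [hσ v, Function.comp_apply, Matrix.mulVec_mulVec]
    have hbij : Function.Bijective (A.mulVec ∘ B.mulVec) := by
      rw [← hfun]; exact σ.bijective
    have hAbij : Function.Bijective (A.mulVec : (Fin n → K) → (Fin n → K)) :=
      Finite.surjective_iff_bijective.mp (Function.Surjective.of_comp hbij.2)
    have hBbij : Function.Bijective (B.mulVec : (Fin n → K) → (Fin n → K)) :=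
      Finite.injective_iff_bijective.mp (Function.Injective.of_comp hbij.1)
    set σA := Equiv.ofBijective _ hAbij
    set σB := Equiv.ofBijective _ hBbij
    have : σ = σA * σB := by
      apply Equiv.ext
      intro v
      rw [hσ v, ← Matrix.mulVec_mulVec]
      rfl
    rw [this, map_mul, hA σA (fun v => rfl), hB σB (fun v => rfl), mul_one]

lemma eval_aeval' (v : Fin n → K) (G : Fin n → MvPolynomial (Fin n) K)
    (p : MvPolynomial (Fin n) K) :
    eval v (aeval G p) = eval (fun j => eval v (G j)) p := by
  induction p using MvPolynomial.induction_on with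
  | C a => simp
  | add p q hp hq => rw [map_add, map_add, hp, hq, map_add]
  | mul_X p i hp => rw [map_mul, aeval_X, map_mul, hp, map_mul, eval_X]

/-- Every tame automorphism is a bijection inducing an even permutation. -/
lemma key (h2 : ∀ x : K, x + x = 0) (hcard : 2 < Fintype.card K)
    (hodd : Odd (Fintype.card K - 1))
    {F : Fin n → MvPolynomial (Fin n) K} (hF : IsTame K n F) :
    ∃ τ : Equiv.Perm (Fin n → K),
      (∀ v, τ v = fun i => eval v (F i)) ∧ Equiv.Perm.sign τ = 1 := by
  induction hF with
  | linear A =>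
    have hinv : ∀ v : Fin n → K,
        ((A⁻¹ : GL (Fin n) K) : Matrix (Fin n) (Fin n) K).mulVec
          ((A : Matrix (Fin n) (Fin n) K).mulVec v) = v := by
      intro v
      rw [Matrix.mulVec_mulVec]
      have : ((A⁻¹ : GL (Fin n) K) : Matrix (Fin n) (Fin n) K)
          * (A : Matrix (Fin n) (Fin n) K) = 1 := A.inv_mul
      rw [this, Matrix.one_mulVec]
    have hinv' : ∀ v : Fin n → K,
        ((A : GL (Fin n) K) : Matrix (Fin n) (Fin n) K).mulVec
          (((A⁻¹ : GL (Fin n) K) : Matrix (Fin n) (Fin n) K).mulVec v) = v := by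
      intro v
      rw [Matrix.mulVec_mulVec]
      have : ((A : GL (Fin n) K) : Matrix (Fin n) (Fin n) K)
          * ((A⁻¹ : GL (Fin n) K) : Matrix (Fin n) (Fin n) K) = 1 := A.mul_inv
      rw [this, Matrix.one_mulVec]
    refine ⟨⟨fun v => (A : Matrix (Fin n) (Fin n) K).mulVec v,
        fun v => ((A⁻¹ : GL (Fin n) K) : Matrix (Fin n) (Fin n) K).mulVec v,
        hinv, hinv'⟩, ?_, ?_⟩
    · intro v
      funext i
      show (A : Matrix (Fin n) (Fin n) K).mulVec v i = _
      simp [Matrix.mulVec, dotProduct]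
    · have hdet : ((A : Matrix (Fin n) (Fin n) K)).det ≠ 0 := by
        have h1 : ((A : Matrix (Fin n) (Fin n) K)
            * ((A⁻¹ : GL (Fin n) K) : Matrix (Fin n) (Fin n) K)).det = 1 := by
          rw [A.mul_inv, Matrix.det_one]
        rw [Matrix.det_mul] at h1
        intro h0
        rw [h0, zero_mul] at h1
        exact zero_ne_one h1
      exact sign_of_mulVec h2 hcard hodd _ hdet _ (fun v => rfl)
  | elementary i f hf =>
    refine ⟨elemPerm h2 i f hf, ?_, sign_elemPerm h2 hcard i f hf⟩
    intro v
    funext k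
    show elemMap i f v k = eval v (Function.update X i (X i + f) k)
    simp only [elemMap, Function.update_apply]
    split_ifs with h
    · simp
    · simp
  | comp hFt hGt ihF ihG =>
    obtain ⟨τF, hτF, sF⟩ := ihF
    obtain ⟨τG, hτG, sG⟩ := ihG
    refine ⟨τF * τG, ?_, by rw [map_mul, sF, sG, mul_one]⟩
    intro v
    rw [Equiv.Perm.mul_apply, hτF, hτG]
    funext i
    rw [eval_aeval']

end Stmt13Aux

/-- Over 𝔽_q, q = 2^m, m ≥ 2, every tame automorphism (n ≥ 2) induces an even permutation:
ε(TAₙ(𝔽_q)) ⊆ Alt(𝔽_qⁿ). -/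
theorem stmt_13 (K : Type) [Field K] [Fintype K] [DecidableEq K] (m : ℕ) (hm : 2 ≤ m)
    (hq : Fintype.card K = 2 ^ m) (n : ℕ) (hn : 2 ≤ n)
    (F : Fin n → MvPolynomial (Fin n) K) (hF : IsTame K n F)
    (σ : Equiv.Perm (Fin n → K)) (hσ : ∀ v, σ v = fun i => eval v (F i)) :
    Equiv.Perm.sign σ = 1 := by
  have h2 : ∀ x : K, x + x = 0 := by
    have hcast : ((Fintype.card K : ℕ) : K) = 0 := FiniteField.cast_card_eq_zero K
    rw [hq] at hcast
    push_cast at hcast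
    have h20 : (2 : K) = 0 := by
      have := pow_eq_zero_iff (n := m) (by omega) |>.mp hcast
      exact this
    intro x
    rw [← two_mul, h20, zero_mul]
  have hcard : 2 < Fintype.card K := by
    rw [hq]
    have : 2 ^ 2 ≤ 2 ^ m := Nat.pow_le_pow_right (by norm_num) hm
    omega
  have hodd : Odd (Fintype.card K - 1) := by
    rw [hq]
    refine Nat.Even.sub_odd Nat.one_le_two_pow ?_ odd_one
    exact (Nat.even_pow).mpr ⟨even_two, by omega⟩
  obtain ⟨τ, hτ, hs⟩ := Stmt13Aux.key h2 hcard hodd hF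
  have hστ : σ = τ := Equiv.ext fun v => (hσ v).trans (hτ v).symm
  rw [hστ]
  exact hs
end

section
/- For n ≥ 2 and q odd or q = 2, every permutation of 𝔽_qⁿ is induced by some tame polynomial automorphism: ε(TAₙ(𝔽_q)) = Sym(𝔽_qⁿ). -/
set_option linter.unusedSectionVars false

open MvPolynomial

namespace Maubach

variable {K : Type} [Field K] [Fintype K] [DecidableEq K] {n : ℕ}

/-- the set of permutations induced by tame automorphisms -/
def S (K : Type) [Field K] [Fintype K] (n : ℕ) : Set (Equiv.Perm (Fin n → K)) :=
  {σ | ∃ F : Fin n → MvPolynomial (Fin n) K,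
      IsTame K n F ∧ ∀ v, σ v = fun i => eval v (F i)}

omit [DecidableEq K] in
lemma eval_aeval' (v : Fin n → K) (G : Fin n → MvPolynomial (Fin n) K)
    (p : MvPolynomial (Fin n) K) :
    eval v (aeval G p) = eval (fun j => eval v (G j)) p := by
  induction p using MvPolynomial.induction_on with
  | C a => simp
  | add p q hp hq => simp only [map_add, hp, hq]
  | mul_X p i hp => simp only [map_mul, hp, aeval_X, eval_X]

omit [DecidableEq K] in
lemma one_mem_S : (1 : Equiv.Perm (Fin n → K)) ∈ S K n := by
  refine ⟨fun i => ∑ j, MvPolynomial.C ((1 : Matrix (Fin n) (Fin n) K) i j) * MvPolynomial.X j,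
    ?_, ?_⟩
  · have := IsTame.linear (K := K) (n := n) 1
    simpa using this
  · intro v
    funext i
    simp [Matrix.one_apply, ite_mul]

omit [DecidableEq K] in
lemma mul_mem_S {σ τ : Equiv.Perm (Fin n → K)} (hσ : σ ∈ S K n) (hτ : τ ∈ S K n) :
    σ * τ ∈ S K n := by
  obtain ⟨F, hF, hFe⟩ := hσ
  obtain ⟨G, hG, hGe⟩ := hτ
  refine ⟨fun i => aeval G (F i), hF.comp hG, fun v => ?_⟩
  have : τ v = fun j => eval v (G j) := hGe v
  calc (σ * τ) v = σ (τ v) := rfl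
    _ = fun i => eval (τ v) (F i) := hFe (τ v)
    _ = fun i => eval v (aeval G (F i)) := by
        funext i; rw [this, eval_aeval']

omit [DecidableEq K] in
lemma pow_mem_S {σ : Equiv.Perm (Fin n → K)} (hσ : σ ∈ S K n) (m : ℕ) : σ ^ m ∈ S K n := by
  induction m with
  | zero => simpa using one_mem_S
  | succ m ih => rw [pow_succ]; exact mul_mem_S ih hσ

omit [DecidableEq K] in
lemma inv_mem_S {σ : Equiv.Perm (Fin n → K)} (hσ : σ ∈ S K n) : σ⁻¹ ∈ S K n := by
  have h1 : σ ^ orderOf σ = 1 := pow_orderOf_eq_one σ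
  have hpos : 0 < orderOf σ := orderOf_pos σ
  have : σ⁻¹ = σ ^ (orderOf σ - 1) := by
    apply inv_eq_of_mul_eq_one_left
    rw [← pow_succ]
    rw [Nat.sub_add_cancel hpos]
    exact h1
  rw [this]
  exact pow_mem_S hσ _

/-- the subgroup of permutations induced by tame automorphisms -/
def Sgrp (K : Type) [Field K] [Fintype K] (n : ℕ) : Subgroup (Equiv.Perm (Fin n → K)) where
  carrier := S K n
  one_mem' := one_mem_S
  mul_mem' := mul_mem_S
  inv_mem' := inv_mem_S

omit [DecidableEq K] in
lemma mem_Sgrp {σ : Equiv.Perm (Fin n → K)} : σ ∈ Sgrp K n ↔ σ ∈ S K n := Iff.rfl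

/-- interpolation: every function on a finite product is a polynomial -/
lemma exists_poly {m : Type} [Fintype m] [DecidableEq m] (g : (m → K) → K) :
    ∃ p : MvPolynomial m K, ∀ v, eval v p = g v := by
  classical
  refine ⟨∑ w : m → K, MvPolynomial.C (g w) *
      ∏ j, (1 - (MvPolynomial.X j - MvPolynomial.C (w j)) ^ (Fintype.card K - 1)), fun v => ?_⟩
  rw [map_sum]
  rw [Finset.sum_eq_single v]
  · have h2 : (1 : ℕ) ≤ Fintype.card K - 1 := by
      have := Fintype.one_lt_card (α := K)
      omega
    simp only [map_mul, eval_C, map_prod, map_sub, map_one, map_pow, eval_X]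
    have : ∀ j : m, (1 : K) - (v j - v j) ^ (Fintype.card K - 1) = 1 := by
      intro j
      rw [sub_self, zero_pow (by omega), sub_zero]
    rw [Finset.prod_congr rfl fun j _ => this j]
    simp
  · intro w _ hw
    have : ∃ j, v j ≠ w j := by
      by_contra h
      push_neg at h
      exact hw (funext fun j => (h j).symm)
    obtain ⟨j, hj⟩ := this
    simp only [map_mul, eval_C, map_prod, map_sub, map_one, map_pow, eval_X]
    rw [Finset.prod_eq_zero (Finset.mem_univ j)]
    · ring
    · rw [FiniteField.pow_card_sub_one_eq_one _ (sub_ne_zero.2 hj)]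
      ring
  · intro h
    exact absurd (Finset.mem_univ v) h

/-- elementary permutation: add to coordinate `i` an arbitrary function of the others -/
def elemPerm (i : Fin n) (c : ({j : Fin n // j ≠ i} → K) → K) : Equiv.Perm (Fin n → K) where
  toFun v := Function.update v i (v i + c (fun j => v j.1))
  invFun v := Function.update v i (v i - c (fun j => v j.1))
  left_inv v := by
    have h : (fun j : {j : Fin n // j ≠ i} =>
        Function.update v i (v i + c (fun j => v j.1)) j.1) = fun j => v j.1 := by
      funext j; exact Function.update_of_ne j.2 _ v
    simp [h, Function.update_idem]
  right_inv v := by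
    have h : (fun j : {j : Fin n // j ≠ i} =>
        Function.update v i (v i - c (fun j => v j.1)) j.1) = fun j => v j.1 := by
      funext j; exact Function.update_of_ne j.2 _ v
    simp [h, Function.update_idem]

omit [Fintype K] [DecidableEq K] in
lemma elemPerm_apply (i : Fin n) (c : ({j : Fin n // j ≠ i} → K) → K) (v : Fin n → K) :
    elemPerm i c v = Function.update v i (v i + c (fun j => v j.1)) := rfl

lemma elemPerm_mem (i : Fin n) (c : ({j : Fin n // j ≠ i} → K) → K) :
    elemPerm i c ∈ S K n := by
  obtain ⟨p, hp⟩ := exists_poly (K := K) c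
  refine ⟨Function.update MvPolynomial.X i (MvPolynomial.X i + rename Subtype.val p), ?_, ?_⟩
  · refine IsTame.elementary i _ ?_
    intro hi
    obtain ⟨j, _, hj⟩ := mem_vars_rename _ _ hi
    exact j.2 hj
  · intro v
    funext j
    by_cases hj : j = i
    · subst hj
      rw [elemPerm_apply, Function.update_self, Function.update_self]
      rw [map_add, eval_X, eval_rename, hp]
      rfl
    · rw [elemPerm_apply, Function.update_of_ne hj, Function.update_of_ne hj, eval_X]

/-- scaling coordinate `k` by a nonzero constant -/
def scalePerm (k : Fin n) (g : K) (hg : g ≠ 0) : Equiv.Perm (Fin n → K) where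
  toFun v := Function.update v k (g * v k)
  invFun v := Function.update v k (g⁻¹ * v k)
  left_inv v := by
    simp [Function.update_idem, inv_mul_cancel_left₀ hg]
  right_inv v := by
    simp [Function.update_idem, mul_inv_cancel_left₀ hg]

lemma scalePerm_apply (k : Fin n) (g : K) (hg : g ≠ 0) (v : Fin n → K) :
    scalePerm k g hg v = Function.update v k (g * v k) := rfl

lemma scalePerm_mem (k : Fin n) (g : K) (hg : g ≠ 0) : scalePerm k g hg ∈ S K n := by
  classical
  set d : Fin n → K := fun j => if j = k then g else 1 with hd
  set d' : Fin n → K := fun j => if j = k then g⁻¹ else 1 with hd'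
  have hdd' : ∀ j, d j * d' j = 1 := by
    intro j
    by_cases hj : j = k <;> simp [hd, hd', hj, mul_inv_cancel₀ hg]
  have hd'd : ∀ j, d' j * d j = 1 := by
    intro j
    by_cases hj : j = k <;> simp [hd, hd', hj, inv_mul_cancel₀ hg]
  have hdd'' : Matrix.diagonal d * Matrix.diagonal d' = 1 := by
    rw [Matrix.diagonal_mul_diagonal, ← Matrix.diagonal_one]
    exact congrArg _ (funext hdd')
  have hd'd' : Matrix.diagonal d' * Matrix.diagonal d = 1 := by
    rw [Matrix.diagonal_mul_diagonal, ← Matrix.diagonal_one]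
    exact congrArg _ (funext hd'd)
  clear hdd' hd'd
  set A : GL (Fin n) K := ⟨Matrix.diagonal d, Matrix.diagonal d', hdd'', hd'd'⟩ with hA
  refine ⟨_, IsTame.linear A, ?_⟩
  intro v
  funext i
  have : (A : Matrix (Fin n) (Fin n) K) = Matrix.diagonal d := rfl
  simp only [this, map_sum, map_mul, eval_C, eval_X]
  rw [Finset.sum_eq_single i]
  · by_cases hi : i = k
    · subst hi
      simp [scalePerm_apply, Matrix.diagonal_apply_eq, hd]
    · simp [scalePerm_apply, Function.update_of_ne hi, Matrix.diagonal_apply_eq, hd, hi]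
  · intro b _ hb
    rw [Matrix.diagonal_apply_ne _ (Ne.symm hb)]
    ring
  · intro h; exact absurd (Finset.mem_univ i) h

/-- partial fiber translation over a finset of coordinates -/
def partialPerm (k : Fin n) (H : K → (Fin n → K)) (Q : Finset (Fin n)) (hk : k ∉ Q) :
    Equiv.Perm (Fin n → K) where
  toFun v := fun j => if j ∈ Q then v j + H (v k) j else v j
  invFun v := fun j => if j ∈ Q then v j - H (v k) j else v j
  left_inv v := by
    have hvk : (if k ∈ Q then v k + H (v k) k else v k) = v k := by simp [hk]
    funext j
    by_cases hj : j ∈ Q <;> simp [hj, hvk]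
  right_inv v := by
    have hvk : (if k ∈ Q then v k - H (v k) k else v k) = v k := by simp [hk]
    funext j
    by_cases hj : j ∈ Q <;> simp [hj, hvk]

lemma partialPerm_apply (k : Fin n) (H : K → (Fin n → K)) (Q : Finset (Fin n)) (hk : k ∉ Q)
    (v : Fin n → K) :
    partialPerm k H Q hk v = fun j => if j ∈ Q then v j + H (v k) j else v j := rfl

lemma partialPerm_mem (k : Fin n) (H : K → (Fin n → K)) :
    ∀ (Q : Finset (Fin n)) (hk : k ∉ Q), partialPerm k H Q hk ∈ S K n := by
  classical
  intro Q
  induction Q using Finset.induction_on with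
  | empty =>
      intro hk
      have : partialPerm k H ∅ hk = 1 := by
        apply Equiv.ext
        intro v
        funext j
        simp [partialPerm_apply]
      rw [this]; exact one_mem_S
  | @insert a Q' ha ih =>
      intro hk
      have hka : k ≠ a := fun h => hk (h ▸ Finset.mem_insert_self a Q')
      have hkQ' : k ∉ Q' := fun h => hk (Finset.mem_insert_of_mem h)
      have key : partialPerm k H (insert a Q') hk =
          elemPerm a (fun r => H (r ⟨k, hka⟩) a) * partialPerm k H Q' hkQ' := by
        apply Equiv.ext
        intro v
        funext j
        have hvk : partialPerm k H Q' hkQ' v k = v k := by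
          simp [partialPerm_apply, hkQ']
        show (if j ∈ insert a Q' then v j + H (v k) j else v j) =
          Function.update (partialPerm k H Q' hkQ' v) a
            ((partialPerm k H Q' hkQ' v) a +
              H ((partialPerm k H Q' hkQ' v) k) a) j
        rw [hvk]
        by_cases hja : j = a
        · subst hja
          rw [Function.update_self]
          have : partialPerm k H Q' hkQ' v j = v j := by
            simp [partialPerm_apply, ha]
          rw [this]
          simp
        · rw [Function.update_of_ne hja]
          simp [partialPerm_apply, Finset.mem_insert, hja]
      rw [key]
      exact mul_mem_S (elemPerm_mem _ _) (ih hkQ')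

/-- translation of all coordinates except `k` by a function of coordinate `k` -/
def fiberPerm (k : Fin n) (H : K → (Fin n → K)) (hH : ∀ t, H t k = 0) :
    Equiv.Perm (Fin n → K) :=
  partialPerm k H (Finset.univ.erase k) (Finset.notMem_erase k _)

lemma fiberPerm_apply (k : Fin n) (H : K → (Fin n → K)) (hH : ∀ t, H t k = 0) (v : Fin n → K) :
    fiberPerm k H hH v = fun j => v j + H (v k) j := by
  funext j
  rw [fiberPerm, partialPerm_apply]
  by_cases hj : j = k
  · subst hj; simp [hH]
  · simp [Finset.mem_erase, hj]

lemma fiberPerm_mem (k : Fin n) (H : K → (Fin n → K)) (hH : ∀ t, H t k = 0) :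
    fiberPerm k H hH ∈ S K n :=
  partialPerm_mem k H _ _

/-- translations -/
def transPerm (t : Fin n → K) : Equiv.Perm (Fin n → K) where
  toFun v := fun j => v j + t j
  invFun v := fun j => v j - t j
  left_inv v := by funext j; simp
  right_inv v := by funext j; simp

lemma transPerm_apply (t : Fin n → K) (v : Fin n → K) :
    transPerm t v = fun j => v j + t j := rfl

lemma transPerm_mem (hn : 0 < n) (t : Fin n → K) : transPerm t ∈ S K n := by
  classical
  set k : Fin n := ⟨0, hn⟩
  have key : transPerm t =
      elemPerm k (fun _ => t k) *
        fiberPerm k (fun _ j => if j = k then 0 else t j) (fun _ => by simp) := by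
    apply Equiv.ext
    intro v
    funext j
    simp only [Equiv.Perm.mul_apply, transPerm_apply, elemPerm_apply, fiberPerm_apply]
    by_cases hj : j = k
    · subst hj; simp
    · rw [Function.update_of_ne hj]; simp [hj]
  rw [key]
  exact mul_mem_S (elemPerm_mem _ _) (fiberPerm_mem _ _ _)

section Comm
variable {X : Type} [DecidableEq X]

omit [DecidableEq X] in
lemma perm_apply_inv_self' (f : Equiv.Perm X) (x : X) : f (f⁻¹ x) = x := f.apply_symm_apply x

omit [DecidableEq X] in
lemma perm_inv_apply_self' (f : Equiv.Perm X) (x : X) : f⁻¹ (f x) = x := f.symm_apply_apply x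

/-- commutator of two permutations whose supports meet in exactly one point is a 3-cycle -/
lemma comm3 (α β : Equiv.Perm X) (t : X)
    (hsupp : ∀ z, α z ≠ z → β z ≠ z → z = t) (hat : α t ≠ t) (hbt : β t ≠ t) :
    α * β * α⁻¹ * β⁻¹ = Equiv.swap t (α t) * Equiv.swap (α t) (β t) := by
  have hinj := α.injective
  -- basic facts
  have hsa : ∀ z, α z ≠ z → z ≠ t → β z = z := fun z h1 h2 => by
    by_contra h3; exact h2 (hsupp z h1 h3)
  have hsb : ∀ z, β z ≠ z → z ≠ t → α z = z := fun z h1 h2 => by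
    by_contra h3
    exact h2 (hsupp z h3 h1)
  have hmem_a : ∀ z, α z ≠ z → α (α z) ≠ α z := fun z h1 h2 => h1 (α.injective h2)
  have hmem_b : ∀ z, β z ≠ z → β (β z) ≠ β z := fun z h1 h2 => h1 (β.injective h2)
  have hat' : α (α t) ≠ α t := hmem_a t hat
  have hbt' : β (β t) ≠ β t := hmem_b t hbt
  -- α t is fixed by β, β t is fixed by α
  have hbat : β (α t) = α t := hsa (α t) hat' hat
  have habt : α (β t) = β t := hsb (β t) hbt' hbt
  have hab : α t ≠ β t := fun h => hbt' (by rw [← h, hbat, h])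
  have hainv : ∀ z, α z = z ↔ α⁻¹ z = z := by
    intro z
    rw [Equiv.Perm.inv_eq_iff_eq, eq_comm]
  have hbinv : ∀ z, β z = z ↔ β⁻¹ z = z := by
    intro z
    rw [Equiv.Perm.inv_eq_iff_eq, eq_comm]
  apply Equiv.ext
  intro z
  have happ : (α * β * α⁻¹ * β⁻¹) z = α (β (α⁻¹ (β⁻¹ z))) := rfl
  rw [happ, Equiv.Perm.mul_apply]
  by_cases hz1 : z = t
  · subst hz1
    have h1 : β⁻¹ z ≠ z := fun h => hbt ((hbinv z).2 h)
    have h2 : β (β⁻¹ z) ≠ β⁻¹ z := by rw [perm_apply_inv_self']; exact Ne.symm h1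
    have h4 : α (β⁻¹ z) = β⁻¹ z := hsb _ h2 h1
    rw [(hainv _).1 h4, perm_apply_inv_self',
      Equiv.swap_apply_of_ne_of_ne (Ne.symm hat) (Ne.symm hbt), Equiv.swap_apply_left]
  · by_cases hz2 : z = α t
    · subst hz2
      rw [(hbinv _).1 hbat, perm_inv_apply_self', habt,
        Equiv.swap_apply_left, Equiv.swap_apply_of_ne_of_ne hbt (Ne.symm hab)]
    · by_cases hz3 : z = β t
      · subst hz3
        have h1 : α⁻¹ t ≠ t := fun h => hat (by conv_lhs => rw [← h, perm_apply_inv_self'])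
        have h2 : α (α⁻¹ t) ≠ α⁻¹ t := by rw [perm_apply_inv_self']; exact Ne.symm h1
        have h3 : β (α⁻¹ t) = α⁻¹ t := hsa _ h2 h1
        rw [perm_inv_apply_self', h3, perm_apply_inv_self',
          Equiv.swap_apply_right, Equiv.swap_apply_right]
      · rw [Equiv.swap_apply_of_ne_of_ne hz2 hz3,
          Equiv.swap_apply_of_ne_of_ne hz1 hz2]
        by_cases hbz : β z = z
        · by_cases haz : α z = z
          · rw [(hbinv _).1 hbz, (hainv _).1 haz, hbz, haz]
          · have h1 : α⁻¹ z ≠ z := fun h => haz ((hainv z).2 h)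
            have h2 : α (α⁻¹ z) ≠ α⁻¹ z := by rw [perm_apply_inv_self']; exact Ne.symm h1
            have h3 : α⁻¹ z ≠ t := fun h => hz2 (by rw [← h, perm_apply_inv_self'])
            have h4 : β (α⁻¹ z) = α⁻¹ z := hsa _ h2 h3
            rw [(hbinv _).1 hbz, h4, perm_apply_inv_self']
        · have haz : α z = z := hsb _ hbz hz1
          have h1 : β⁻¹ z ≠ z := fun h => hbz ((hbinv z).2 h)
          have h2 : β (β⁻¹ z) ≠ β⁻¹ z := by rw [perm_apply_inv_self']; exact Ne.symm h1
          have h3 : β⁻¹ z ≠ t := fun h => hz3 (by rw [← h, perm_apply_inv_self'])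
          have h4 : α (β⁻¹ z) = β⁻¹ z := hsb _ h2 h3
          rw [(hainv _).1 h4, perm_apply_inv_self', haz]
end Comm

lemma tri_conj {x y z : Fin n → K} (h : Equiv.swap x y * Equiv.swap y z ∈ S K n)
    {σ : Equiv.Perm (Fin n → K)} (hσ : σ ∈ S K n) :
    Equiv.swap (σ x) (σ y) * Equiv.swap (σ y) (σ z) ∈ S K n := by
  have key : Equiv.swap (σ x) (σ y) * Equiv.swap (σ y) (σ z) =
      σ * (Equiv.swap x y * Equiv.swap y z) * σ⁻¹ := by
    rw [Equiv.swap_apply_apply, Equiv.swap_apply_apply]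
    group
  rw [key]
  exact mul_mem_S (mul_mem_S hσ h) (inv_mem_S hσ)

lemma tri_conj' {x y z : Fin n → K} {σ : Equiv.Perm (Fin n → K)} (hσ : σ ∈ S K n)
    (h : Equiv.swap (σ x) (σ y) * Equiv.swap (σ y) (σ z) ∈ S K n) :
    Equiv.swap x y * Equiv.swap y z ∈ S K n := by
  have := tri_conj h (inv_mem_S hσ)
  simpa using this

/-- the base 3-cycle: 0 → c·eᵢ → d·eₖ → 0 -/
lemma base3_mem (i k : Fin n) (hik : i ≠ k) (c d : K) (hc : c ≠ 0) (hd : d ≠ 0) :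
    Equiv.swap 0 (Pi.single i c) * Equiv.swap (Pi.single i c) (Pi.single k d) ∈ S K n := by
  classical
  set α := elemPerm (K := K) i (fun r => if r = 0 then c else 0) with hα
  set β := elemPerm (K := K) k (fun r => if r = 0 then d else 0) with hβ
  have hαfix : ∀ v : Fin n → K, α v ≠ v → ∀ j, j ≠ i → v j = 0 := by
    intro v hv j hj
    by_contra hvj
    apply hv
    have : (fun j : {j : Fin n // j ≠ i} => v j.1) ≠ 0 := by
      intro h
      exact hvj (congrFun h ⟨j, hj⟩)
    rw [hα, elemPerm_apply, if_neg this, add_zero, Function.update_eq_self]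
  have hβfix : ∀ v : Fin n → K, β v ≠ v → ∀ j, j ≠ k → v j = 0 := by
    intro v hv j hj
    by_contra hvj
    apply hv
    have : (fun j : {j : Fin n // j ≠ k} => v j.1) ≠ 0 := by
      intro h
      exact hvj (congrFun h ⟨j, hj⟩)
    rw [hβ, elemPerm_apply, if_neg this, add_zero, Function.update_eq_self]
  have hα0 : α 0 = Pi.single i c := by
    rw [hα, elemPerm_apply]
    have : (fun j : {j : Fin n // j ≠ i} => (0 : Fin n → K) j.1) = 0 := rfl
    rw [this, if_pos rfl]
    funext j
    by_cases hj : j = i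
    · subst hj; simp
    · rw [Function.update_of_ne hj, Pi.single_eq_of_ne hj]; rfl
  have hβ0 : β 0 = Pi.single k d := by
    rw [hβ, elemPerm_apply]
    have : (fun j : {j : Fin n // j ≠ k} => (0 : Fin n → K) j.1) = 0 := rfl
    rw [this, if_pos rfl]
    funext j
    by_cases hj : j = k
    · subst hj; simp
    · rw [Function.update_of_ne hj, Pi.single_eq_of_ne hj]; rfl
  have hat : α 0 ≠ 0 := by
    rw [hα0]
    intro h
    exact hc (by simpa using congrFun h i)
  have hbt : β 0 ≠ 0 := by
    rw [hβ0]
    intro h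
    exact hd (by simpa using congrFun h k)
  have hsupp : ∀ v : Fin n → K, α v ≠ v → β v ≠ v → v = 0 := by
    intro v h1 h2
    funext j
    by_cases hj : j = i
    · subst hj; exact hβfix v h2 _ hik
    · exact hαfix v h1 _ hj
  have key := comm3 α β 0 hsupp hat hbt
  rw [hα0, hβ0] at key
  rw [← key]
  exact mul_mem_S (mul_mem_S (mul_mem_S (elemPerm_mem _ _) (elemPerm_mem _ _))
    (inv_mem_S (elemPerm_mem _ _))) (inv_mem_S (elemPerm_mem _ _))

lemma triA1 (i0 k : Fin n) (hk : k ≠ i0) (w : Fin n → K) (hwk : w k ≠ 0) :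
    Equiv.swap 0 (Pi.single i0 1) * Equiv.swap (Pi.single i0 1) w ∈ S K n := by
  classical
  have base := base3_mem i0 k (Ne.symm hk) 1 (w k) one_ne_zero hwk
  set H : K → (Fin n → K) := fun t j => if j = k then 0 else t * (w k)⁻¹ * w j with hH
  have hHk : ∀ t, H t k = 0 := fun t => by simp [hH]
  set σ := fiberPerm k H hHk with hσ
  have e0 : σ (0 : Fin n → K) = 0 := by
    funext j
    rw [hσ, fiberPerm_apply]
    by_cases hj : j = k <;> simp [hH, hj]
  have e1 : σ (Pi.single i0 1) = Pi.single i0 1 := by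
    funext j
    rw [hσ, fiberPerm_apply]
    rw [Pi.single_eq_of_ne hk]
    by_cases hj : j = k <;> simp [hH, hj]
  have e2 : σ (Pi.single k (w k)) = w := by
    funext j
    rw [hσ, fiberPerm_apply, Pi.single_eq_same]
    by_cases hj : j = k
    · subst hj; simp [hH]
    · simp only [Pi.single_eq_of_ne hj, hH, if_neg hj, zero_add,
        mul_inv_cancel₀ hwk, one_mul]
  have := tri_conj base (fiberPerm_mem k H hHk)
  rw [← hσ, e0, e1, e2] at this
  exact this

lemma triA (hn : 2 ≤ n) (i0 : Fin n) (w : Fin n → K) (hw0 : w ≠ 0)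
    (hw1 : w ≠ Pi.single i0 1) :
    Equiv.swap 0 (Pi.single i0 1) * Equiv.swap (Pi.single i0 1) w ∈ S K n := by
  classical
  by_cases hcase : ∃ k, k ≠ i0 ∧ w k ≠ 0
  · obtain ⟨k, hk, hwk⟩ := hcase
    exact triA1 i0 k hk w hwk
  · push_neg at hcase
    have weq : w = Pi.single i0 (w i0) := by
      funext j
      by_cases hj : j = i0
      · subst hj; rw [Pi.single_eq_same]
      · rw [Pi.single_eq_of_ne hj, hcase j hj]
    have hwi0 : w i0 ≠ 0 := by
      intro h
      apply hw0
      rw [weq, h, Pi.single_zero]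
    have hwi1 : w i0 ≠ 1 := by
      intro h
      apply hw1
      rw [weq, h]
    obtain ⟨k1, hk1⟩ : ∃ k1 : Fin n, k1 ≠ i0 := by
      by_cases h : i0 = ⟨0, by omega⟩
      · exact ⟨⟨1, by omega⟩, by rw [h]; exact Fin.ne_of_val_ne (by norm_num)⟩
      · exact ⟨⟨0, by omega⟩, fun hh => h hh.symm⟩
    set ω : Fin n → K := Pi.single i0 (w i0) + Pi.single k1 (1 : K) with hω
    have hωk1 : ω k1 = 1 := by
      rw [hω, Pi.add_apply, Pi.single_eq_of_ne hk1, Pi.single_eq_same, zero_add]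
    have base' := triA1 i0 k1 hk1 ω (by rw [hωk1]; exact one_ne_zero)
    set σ := elemPerm (K := K) k1
      (fun r => if r ⟨i0, Ne.symm hk1⟩ = w i0 then -1 else 0) with hσ
    have e0 : σ (0 : Fin n → K) = 0 := by
      rw [hσ, elemPerm_apply]
      rw [if_neg (by simpa using Ne.symm hwi0)]
      rw [add_zero, Function.update_eq_self]
    have e1 : σ (Pi.single i0 1) = Pi.single i0 1 := by
      rw [hσ, elemPerm_apply]
      have hval : (fun j : {j : Fin n // j ≠ k1} => (Pi.single i0 (1:K) : Fin n → K) j.1)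
          ⟨i0, Ne.symm hk1⟩ = 1 := by simp
      rw [if_neg (by rw [hval]; exact Ne.symm hwi1), add_zero]
      exact Function.update_eq_self k1 _
    have e2 : σ ω = w := by
      rw [hσ, elemPerm_apply]
      have harg : ω i0 = w i0 := by
        rw [hω, Pi.add_apply, Pi.single_eq_same, Pi.single_eq_of_ne (Ne.symm hk1), add_zero]
      rw [if_pos harg, hωk1]
      funext j
      by_cases hj : j = k1
      · subst hj
        rw [Function.update_self, hcase j hk1]
        ring
      · rw [Function.update_of_ne hj, hω, Pi.add_apply, Pi.single_eq_of_ne hj, add_zero]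
        conv_rhs => rw [weq]
    have := tri_conj base' (show σ ∈ S K n from elemPerm_mem _ _)
    rw [e0, e1, e2] at this
    exact this

lemma tri_mem (hn : 2 ≤ n) (x y z : Fin n → K) (hxy : x ≠ y) (hyz : y ≠ z) (hxz : x ≠ z) :
    Equiv.swap x y * Equiv.swap y z ∈ S K n := by
  classical
  set i0 : Fin n := ⟨0, by omega⟩ with hi0
  -- step 2 and 3: triples of the form (0, u, w)
  have main2 : ∀ u w : Fin n → K, u i0 ≠ 0 → w ≠ 0 → w ≠ u →
      Equiv.swap 0 u * Equiv.swap u w ∈ S K n := by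
    intro u w hui0 hw hwu
    set H : K → (Fin n → K) := fun t j => if j = i0 then 0 else -(t * (u i0)⁻¹ * u j) with hH
    have hHk : ∀ t, H t i0 = 0 := fun t => by simp [hH]
    set σ1 := fiberPerm i0 H hHk with hσ1
    set σ2 := scalePerm i0 (u i0)⁻¹ (inv_ne_zero hui0) with hσ2
    set σ := σ2 * σ1 with hσ
    have hσmem : σ ∈ S K n := mul_mem_S (scalePerm_mem _ _ _) (fiberPerm_mem _ _ _)
    have e0 : σ (0 : Fin n → K) = 0 := by
      have h1 : σ1 (0 : Fin n → K) = 0 := by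
        funext j
        rw [hσ1, fiberPerm_apply]
        by_cases hj : j = i0 <;> simp [hH, hj]
      rw [hσ, Equiv.Perm.mul_apply, h1, hσ2, scalePerm_apply]
      rw [Pi.zero_apply, mul_zero]
      funext j
      by_cases hj : j = i0
      · subst hj; rw [Function.update_self]; rfl
      · rw [Function.update_of_ne hj]
    have eu : σ u = Pi.single i0 1 := by
      have h1 : σ1 u = Pi.single i0 (u i0) := by
        funext j
        rw [hσ1, fiberPerm_apply]
        by_cases hj : j = i0
        · subst hj; rw [Pi.single_eq_same]; simp [hH]
        · rw [Pi.single_eq_of_ne hj]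
          simp only [hH, if_neg hj]
          rw [mul_comm (u i0), mul_assoc, inv_mul_cancel_left₀ hui0]
          ring
      rw [hσ, Equiv.Perm.mul_apply, h1, hσ2, scalePerm_apply]
      funext j
      by_cases hj : j = i0
      · subst hj
        rw [Function.update_self, Pi.single_eq_same, Pi.single_eq_same,
          inv_mul_cancel₀ hui0]
      · rw [Function.update_of_ne hj, Pi.single_eq_of_ne hj, Pi.single_eq_of_ne hj]
    refine tri_conj' hσmem ?_
    rw [e0, eu]
    refine triA hn i0 (σ w) ?_ ?_
    · rw [← e0]; exact fun h => hw (σ.injective h)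
    · rw [← eu]; exact fun h => hwu (σ.injective h)
  -- step 1+2: reduce to u i0 ≠ 0
  have main : ∀ u w : Fin n → K, u ≠ 0 → w ≠ 0 → w ≠ u →
      Equiv.swap 0 u * Equiv.swap u w ∈ S K n := by
    intro u w hu hw hwu
    by_cases hui : u i0 ≠ 0
    · exact main2 u w hui hw hwu
    · push_neg at hui
      obtain ⟨k, hk⟩ : ∃ k, u k ≠ 0 := Function.ne_iff.1 hu
      have hki0 : k ≠ i0 := fun h => hk (h ▸ hui)
      set σ := elemPerm (K := K) i0 (fun r => r ⟨k, hki0⟩) with hσ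
      have e0 : σ (0 : Fin n → K) = 0 := by
        rw [hσ, elemPerm_apply]
        show Function.update (0 : Fin n → K) i0 ((0:K) + (0:K)) = 0
        rw [add_zero]
        exact Function.update_eq_self i0 (0 : Fin n → K)
      refine tri_conj' (show σ ∈ S K n from elemPerm_mem _ _) ?_
      rw [e0]
      refine main2 (σ u) (σ w) ?_ ?_ ?_
      · rw [hσ, elemPerm_apply, Function.update_self, hui, zero_add]
        exact hk
      · rw [← e0]; exact fun h => hw (σ.injective h)
      · exact fun h => hwu (σ.injective h)
  have hσmem := transPerm_mem (show 0 < n by omega) (fun j => - x j)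
  refine tri_conj' hσmem ?_
  have e0 : transPerm (K := K) (fun j => - x j) x = 0 := by
    funext j; rw [transPerm_apply]; exact add_neg_cancel (x j)
  rw [e0]
  refine main _ _ ?_ ?_ ?_
  · rw [← e0]; exact fun h => hxy.symm ((transPerm (fun j => - x j)).injective h)
  · rw [← e0]; exact fun h => hxz.symm ((transPerm (fun j => - x j)).injective h)
  · exact fun h => hyz.symm ((transPerm (fun j => - x j)).injective h)

lemma threeCycle_mem (hn : 2 ≤ n) {σ : Equiv.Perm (Fin n → K)} (h : σ.IsThreeCycle) :
    σ ∈ S K n := by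
  classical
  have hcard := h.card_support
  obtain ⟨a, ha⟩ : σ.support.Nonempty := Finset.card_pos.1 (by rw [hcard]; norm_num)
  have haa : σ a ≠ a := Equiv.Perm.mem_support.1 ha
  set b := σ a with hb
  set c := σ b with hc
  have hbsup : b ∈ σ.support := Equiv.Perm.apply_mem_support.2 ha
  have hba : b ≠ a := haa
  have hcb : c ≠ b := Equiv.Perm.mem_support.1 hbsup
  have hcsup : c ∈ σ.support := Equiv.Perm.apply_mem_support.2 hbsup
  have hca : c ≠ a := by
    intro hceq
    have hsub : ¬ σ.support ⊆ {a, b} := by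
      intro hsub
      have := Finset.card_le_card hsub
      rw [hcard] at this
      have h2 : ({a, b} : Finset (Fin n → K)).card ≤ 2 := Finset.card_insert_le _ _ |>.trans
        (by norm_num)
      omega
    obtain ⟨d, hd, hdab⟩ := Finset.not_subset.1 hsub
    have hda : d ≠ a := fun hh => hdab (by rw [hh]; exact Finset.mem_insert_self _ _)
    have hdb : d ≠ b := fun hh => hdab (by rw [hh]; simp)
    have hsupeq : σ.support = {a, b, d} := by
      apply (Finset.eq_of_subset_of_card_le ?_ ?_).symm
      · intro x hx
        rcases Finset.mem_insert.1 hx with rfl | hx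
        · exact ha
        rcases Finset.mem_insert.1 hx with rfl | hx
        · exact hbsup
        · rw [Finset.mem_singleton.1 hx]; exact hd
      · rw [hcard, Finset.card_insert_of_notMem (by simp [Ne.symm hba, Ne.symm hda]),
          Finset.card_insert_of_notMem (by simp [Ne.symm hdb]), Finset.card_singleton]
    have hσd : σ d ∈ σ.support := Equiv.Perm.apply_mem_support.2 hd
    rw [hsupeq] at hσd
    have hdd : σ d ≠ d := Equiv.Perm.mem_support.1 hd
    rcases Finset.mem_insert.1 hσd with hh | hσd
    · exact hdb (σ.injective (by rw [hh, ← hceq]))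
    rcases Finset.mem_insert.1 hσd with hh | hσd
    · exact hda (σ.injective (by rw [hh, hb]) )
    · exact hdd (Finset.mem_singleton.1 hσd)
  have hsupeq : σ.support = {a, b, c} := by
    apply (Finset.eq_of_subset_of_card_le ?_ ?_).symm
    · intro x hx
      rcases Finset.mem_insert.1 hx with rfl | hx
      · exact ha
      rcases Finset.mem_insert.1 hx with rfl | hx
      · exact hbsup
      · rw [Finset.mem_singleton.1 hx]; exact hcsup
    · rw [hcard, Finset.card_insert_of_notMem (by simp [Ne.symm hba, Ne.symm hca]),
        Finset.card_insert_of_notMem (by simp [Ne.symm hcb]), Finset.card_singleton]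
  have hord : σ ^ 3 = 1 := by
    rw [← h.orderOf]
    exact pow_orderOf_eq_one σ
  have hσc : σ c = a := by
    have : σ c = (σ ^ 3) a := by
      rw [hc, hb]
      simp [pow_succ, Equiv.Perm.mul_apply]
    rw [this, hord, Equiv.Perm.one_apply]
  have heq : σ = Equiv.swap a b * Equiv.swap b c := by
    apply Equiv.ext
    intro x
    rw [Equiv.Perm.mul_apply]
    by_cases hx : x = a
    · subst hx
      rw [Equiv.swap_apply_of_ne_of_ne (Ne.symm hba) (Ne.symm hca), Equiv.swap_apply_left,
        ← hb]
    · by_cases hx2 : x = b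
      · subst hx2
        rw [Equiv.swap_apply_left, Equiv.swap_apply_of_ne_of_ne hca hcb, ← hc]
      · by_cases hx3 : x = c
        · subst hx3
          rw [Equiv.swap_apply_right, Equiv.swap_apply_right, hσc]
        · have hxsup : x ∉ σ.support := by
            rw [hsupeq]
            simp [hx, hx2, hx3]
          rw [Equiv.swap_apply_of_ne_of_ne hx2 hx3, Equiv.swap_apply_of_ne_of_ne hx hx2]
          exact Equiv.Perm.notMem_support.1 hxsup
  rw [heq]
  exact tri_mem hn a b c (Ne.symm hba) (Ne.symm hcb) (Ne.symm hca)

lemma alt_le (hn : 2 ≤ n) :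
    alternatingGroup (Fin n → K) ≤ Sgrp K n := by
  rw [← Equiv.Perm.closure_three_cycles_eq_alternating]
  exact (Subgroup.closure_le _).2 fun σ hσ => threeCycle_mem hn hσ

/-- for q = 2: an elementary transposition -/
lemma exists_odd_two (hq : Fintype.card K = 2) (hn : 2 ≤ n) :
    ∃ σ ∈ S K n, Equiv.Perm.sign σ = -1 := by
  classical
  set i0 : Fin n := ⟨0, by omega⟩ with hi0
  have two_cases : ∀ x : K, x = 0 ∨ x = 1 := by
    intro x
    have hcard : ({0, 1} : Finset K).card = 2 := by
      rw [Finset.card_insert_of_notMem (by simp), Finset.card_singleton]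
    have huniv : ({0, 1} : Finset K) = Finset.univ :=
      Finset.eq_of_subset_of_card_le (Finset.subset_univ _)
        (by rw [Finset.card_univ, hq, hcard])
    have : x ∈ ({0, 1} : Finset K) := huniv ▸ Finset.mem_univ x
    simpa using this
  have honechar : (1 : K) + 1 = 0 := by
    rcases two_cases (1 + 1) with h | h
    · exact h
    · exact absurd (by linear_combination h) (one_ne_zero (α := K))
  set b : Fin n → K := fun _ => 1 with hb
  set a : Fin n → K := Function.update b i0 0 with ha
  have hab : a ≠ b := by
    intro h
    have := congrFun h i0
    rw [ha, Function.update_self, hb] at this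
    exact zero_ne_one this
  set σe := elemPerm (K := K) i0
    (fun r => if r = (fun _ => 1) then 1 else 0) with hσe
  have heq : σe = Equiv.swap a b := by
    apply Equiv.ext
    intro v
    rw [hσe, elemPerm_apply]
    by_cases h1 : (fun j : {j : Fin n // j ≠ i0} => v j.1) = (fun _ => 1)
    · have hdi : v = a ∨ v = b := by
        rcases two_cases (v i0) with h0 | h0
        · left
          funext j
          by_cases hj : j = i0
          · subst hj; rw [ha, Function.update_self]; exact h0
          · rw [ha, Function.update_of_ne hj, hb]; exact congrFun h1 ⟨j, hj⟩
        · right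
          funext j
          by_cases hj : j = i0
          · subst hj; rw [hb]; exact h0
          · rw [hb]; exact congrFun h1 ⟨j, hj⟩
      rw [if_pos h1]
      rcases hdi with rfl | rfl
      · rw [Equiv.swap_apply_left]
        funext j
        by_cases hj : j = i0
        · subst hj
          rw [Function.update_self, ha, Function.update_self, zero_add, hb]
        · rw [Function.update_of_ne hj, ha, Function.update_of_ne hj]
      · rw [Equiv.swap_apply_right]
        funext j
        by_cases hj : j = i0
        · subst hj
          rw [Function.update_self, hb, honechar, ha, Function.update_self]
        · rw [Function.update_of_ne hj, ha, Function.update_of_ne hj]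
    · rw [if_neg h1, add_zero, Function.update_eq_self]
      obtain ⟨j, hj⟩ := Function.ne_iff.1 h1
      have hva : v ≠ a := by
        intro h
        apply hj
        rw [h, ha, Function.update_of_ne j.2, hb]
      have hvb : v ≠ b := by
        intro h
        apply hj
        rw [h, hb]
      rw [Equiv.swap_apply_of_ne_of_ne hva hvb]
  refine ⟨σe, elemPerm_mem _ _, ?_⟩
  rw [heq]
  exact Equiv.Perm.sign_swap hab

/-- for q odd: scaling by a generator of the multiplicative group -/
lemma exists_odd_odd (hq : Odd (Fintype.card K)) (hn : 2 ≤ n) :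
    ∃ σ ∈ S K n, Equiv.Perm.sign σ = -1 := by
  classical
  set i0 : Fin n := ⟨0, by omega⟩ with hi0
  obtain ⟨gu, hgu⟩ := IsCyclic.exists_generator (α := Kˣ)
  set g : K := (gu : K) with hg
  have hg0 : g ≠ 0 := gu.ne_zero
  have hq2 : Fintype.card K ≠ 2 := by
    intro h
    rw [h, Nat.odd_iff] at hq
    omega
  have hcardK : 1 < Fintype.card K := Fintype.one_lt_card
  have hg1 : g ≠ 1 := by
    intro h
    have hgu1 : gu = 1 := Units.ext h
    have hall : ∀ x : Kˣ, x = 1 := by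
      intro x
      have := hgu x
      rwa [hgu1, Subgroup.zpowers_one_eq_bot, Subgroup.mem_bot] at this
    have hcard1 : Fintype.card Kˣ = 1 := Fintype.card_eq_one_iff.2 ⟨1, fun y => hall y⟩
    rw [Fintype.card_units] at hcard1
    omega
  set μ : Equiv.Perm K := Equiv.mulLeft₀ g hg0 with hμ
  have hμapp : ∀ x, μ x = g * x := fun x => rfl
  have hμpow : ∀ (m : ℕ) (x : K), (μ ^ m) x = g ^ m * x := by
    intro m
    induction m with
    | zero => intro x; simp
    | succ m ih =>
        intro x
        rw [pow_succ, Equiv.Perm.mul_apply, hμapp, ih, pow_succ]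
        ring
  have hfix : ∀ x : K, μ x = x ↔ x = 0 := by
    intro x
    rw [hμapp]
    constructor
    · intro h
      by_contra hx
      exact hg1 (mul_right_cancel₀ hx (by rw [h, one_mul]))
    · intro h
      rw [h, mul_zero]
  have hcyc : μ.IsCycle := by
    refine ⟨1, ?_, ?_⟩
    · rw [hμapp, mul_one]; exact hg1
    · intro y hy
      have hy0 : y ≠ 0 := fun h => hy ((hfix y).2 h)
      have hmem : Units.mk0 y hy0 ∈ Submonoid.powers gu :=
        mem_powers_iff_mem_zpowers.2 (hgu _)
      obtain ⟨m, hm⟩ := (Submonoid.mem_powers_iff _ _).1 hmem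
      refine ⟨(m : ℤ), ?_⟩
      rw [zpow_natCast, hμpow, mul_one]
      have := congrArg Units.val hm
      rwa [Units.val_pow_eq_pow_val] at this
  have hsupport : μ.support = ({(0 : K)} : Finset K)ᶜ := by
    ext x
    rw [Equiv.Perm.mem_support, Finset.mem_compl, Finset.mem_singleton]
    exact not_congr (hfix x)
  have hcards : μ.support.card = Fintype.card K - 1 := by
    rw [hsupport, Finset.card_compl, Finset.card_singleton]
  have hsignμ : Equiv.Perm.sign μ = -1 := by
    rw [hcyc.sign, hcards, Even.neg_one_pow (Nat.Odd.sub_odd hq odd_one)]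
  set e := Equiv.funSplitAt i0 K with he
  set τ : Equiv.Perm (K × ({j : Fin n // j ≠ i0} → K)) :=
    Equiv.prodCongrLeft (fun _ => μ) with hτ
  have heq : scalePerm i0 g hg0 = (Equiv.permCongr e.symm) τ := by
    apply Equiv.ext
    intro v
    rw [scalePerm_apply]
    have hrw : ((Equiv.permCongr e.symm) τ) v = e.symm (τ (e v)) := by
      rw [Equiv.permCongr_apply, Equiv.symm_symm]
    rw [hrw]
    funext j
    by_cases hj : j = i0
    · subst hj
      rw [Function.update_self]
      simp [he, hτ, Equiv.prodCongrLeft_apply, hμapp]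
    · rw [Function.update_of_ne hj]
      simp [he, hτ, Equiv.prodCongrLeft_apply, hμapp, hj]
  refine ⟨scalePerm i0 g hg0, scalePerm_mem _ _ _, ?_⟩
  rw [heq, Equiv.Perm.sign_permCongr, hτ, Equiv.Perm.sign_prodCongrLeft]
  rw [Finset.prod_const, hsignμ]
  refine Odd.neg_one_pow ?_
  rw [Finset.card_univ, Fintype.card_fun]
  exact hq.pow

end Maubach

/-- For n ≥ 2 and q odd or q = 2, every permutation of 𝔽_qⁿ is induced by a tame
automorphism: ε(TAₙ(𝔽_q)) = Sym(𝔽_qⁿ). -/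
theorem stmt_14 (K : Type) [Field K] [Fintype K]
    (hq : Odd (Fintype.card K) ∨ Fintype.card K = 2) (n : ℕ) (hn : 2 ≤ n)
    (τ : Equiv.Perm (Fin n → K)) :
    ∃ F : Fin n → MvPolynomial (Fin n) K,
      IsTame K n F ∧ ∀ v, τ v = fun i => eval v (F i) := by
  classical
  letI : DecidableEq K := Classical.decEq K
  have hτ : τ ∈ Maubach.S K n := by
    obtain ⟨σ, hσ, hσsign⟩ : ∃ σ ∈ Maubach.S K n, Equiv.Perm.sign σ = -1 := by
      rcases hq with h | h
      · exact Maubach.exists_odd_odd h hn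
      · exact Maubach.exists_odd_two h hn
    rcases Int.units_eq_one_or (Equiv.Perm.sign τ) with h1 | h1
    · exact Maubach.alt_le hn (Equiv.Perm.mem_alternatingGroup.2 h1)
    · have halt : τ * σ⁻¹ ∈ alternatingGroup (Fin n → K) := by
        refine Equiv.Perm.mem_alternatingGroup.2 ?_
        rw [map_mul, h1, map_inv, hσsign]
        decide
      have h2 : τ * σ⁻¹ ∈ Maubach.S K n := Maubach.alt_le hn halt
      have h3 : τ = (τ * σ⁻¹) * σ := by group
      rw [h3]
      exact Maubach.mul_mem_S h2 hσ
  exact hτ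
end

section
/- Over 𝔽_q with q = 2^m, m ≥ 2, every polynomial automorphism F of 𝔽_qⁿ that is linearizable (i.e., F = φ⁻¹ ∘ L ∘ φ for some polynomial automorphism φ and linear L ∈ GL_n(𝔽_q)) induces an even permutation of 𝔽_qⁿ. -/
open MvPolynomial

section Aux

set_option linter.unusedSectionVars false

variable {K : Type} [Field K] [Fintype K] [DecidableEq K] {n : ℕ}

/-- The permutation of `Fin n → K` induced by the transvection matrix. -/
def Tperm (i j : Fin n) (hij : i ≠ j) (c : K) : Equiv.Perm (Fin n → K) where
  toFun v := Function.update v i (v i + c * v j)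
  invFun v := Function.update v i (v i - c * v j)
  left_inv v := by
    simp [Function.update_idem, Function.update_of_ne (Ne.symm hij)]
  right_inv v := by
    simp [Function.update_idem, Function.update_of_ne (Ne.symm hij)]

lemma Tperm_coe (i j : Fin n) (hij : i ≠ j) (c : K) (v : Fin n → K) :
    Tperm i j hij c v = (Matrix.transvection i j c).mulVec v := by
  funext k
  simp only [Tperm, Equiv.coe_fn_mk, Matrix.transvection, Matrix.add_mulVec,
    Matrix.one_mulVec, Matrix.single_mulVec, Pi.add_apply]
  rcases eq_or_ne k i with rfl | hk
  · simp
  · simp [Function.update_of_ne hk]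

lemma Tperm_add (i j : Fin n) (hij : i ≠ j) (a b : K) :
    Tperm i j hij (a + b) = Tperm i j hij a * Tperm i j hij b := by
  ext v k
  simp only [Tperm, Equiv.Perm.coe_mul, Function.comp_apply, Equiv.coe_fn_mk]
  rcases eq_or_ne k i with rfl | hk
  · simp only [Function.update_idem, Function.update_self,
      Function.update_of_ne (Ne.symm hij)]
    ring
  · simp [Function.update_of_ne hk]

lemma Tperm_zero (i j : Fin n) (hij : i ≠ j) : Tperm i j hij (0 : K) = 1 := by
  ext v k
  simp [Tperm]

/-- The permutation of `Fin n → K` induced by an invertible diagonal matrix. -/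
def Dperm (u : Fin n → Kˣ) : Equiv.Perm (Fin n → K) where
  toFun v := fun k => (u k : K) * v k
  invFun v := fun k => ((u k)⁻¹ : Kˣ) * v k
  left_inv v := by funext k; simp [← mul_assoc]
  right_inv v := by funext k; simp [← mul_assoc]

lemma Dperm_coe (u : Fin n → Kˣ) (v : Fin n → K) :
    Dperm u v = (Matrix.diagonal (fun k => (u k : K))).mulVec v := by
  funext k
  simp [Dperm, Matrix.mulVec_diagonal]

lemma Dperm_one : Dperm (1 : Fin n → Kˣ) = 1 := by
  ext v k; simp [Dperm]

lemma Dperm_pow_apply (u : Fin n → Kˣ) (k : ℕ) (v : Fin n → K) (l : Fin n) :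
    ((Dperm u) ^ k) v l = ((u l : K)) ^ k * v l := by
  induction k generalizing v with
  | zero => simp
  | succ k ih =>
    rw [pow_succ, Equiv.Perm.mul_apply]
    have h0 : Dperm u v = fun k => (u k : K) * v k := rfl
    rw [h0, ih]
    ring

lemma sign_Dperm (m : ℕ) (hm : 1 ≤ m) (hq : Fintype.card K = 2 ^ m) (u : Fin n → Kˣ) :
    Equiv.Perm.sign (Dperm u) = 1 := by
  have hord : (Dperm u) ^ (Fintype.card Kˣ) = 1 := by
    ext v l
    rw [Dperm_pow_apply]
    have : (u l) ^ (Fintype.card Kˣ) = 1 := pow_card_eq_one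
    have h2 : ((u l : K)) ^ (Fintype.card Kˣ) = 1 := by
      rw [← Units.val_pow_eq_pow_val, this, Units.val_one]
    simp [h2]
  have hodd : Odd (Fintype.card Kˣ) := by
    rw [Fintype.card_units, hq]
    have : Even (2 ^ m) := (Nat.even_pow).mpr ⟨even_two, by omega⟩
    exact Nat.Even.sub_odd (Nat.one_le_two_pow) this odd_one
  have h1 : (Equiv.Perm.sign (Dperm u)) ^ (Fintype.card Kˣ) = 1 := by
    rw [← map_pow, hord, map_one]
  rcases Int.units_eq_one_or (Equiv.Perm.sign (Dperm u)) with h | h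
  · exact h
  · rw [h, hodd.neg_one_pow] at h1
    exact absurd h1 (by decide)

lemma Dperm_mul_Tperm (i j : Fin n) (hij : i ≠ j) (c : K) (s : Kˣ) :
    Dperm (Function.update (fun _ => 1) i s) * Tperm i j hij c =
      Tperm i j hij ((s : K) * c) * Dperm (Function.update (fun _ => 1) i s) := by
  have hji : j ≠ i := Ne.symm hij
  ext v k
  simp only [Equiv.Perm.coe_mul, Function.comp_apply, Dperm, Tperm, Equiv.coe_fn_mk]
  rcases eq_or_ne k i with rfl | hk
  · simp only [Function.update_self, Function.update_of_ne hji, Units.val_one, mul_one]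
    ring
  · simp [Function.update_of_ne hk]

lemma sign_Tperm (hcard : 3 ≤ Fintype.card K) (i j : Fin n) (hij : i ≠ j) (c : K) :
    Equiv.Perm.sign (Tperm i j hij c) = 1 := by
  have key : ∀ s : K, s ≠ 0 → ∀ c : K,
      Equiv.Perm.sign (Tperm i j hij c) = Equiv.Perm.sign (Tperm i j hij (s * c)) := by
    intro s hs c
    have h := congrArg Equiv.Perm.sign (Dperm_mul_Tperm i j hij c (Units.mk0 s hs))
    simp only [map_mul, Units.val_mk0] at h
    rw [mul_comm (Equiv.Perm.sign (Tperm i j hij (s * c)))] at h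
    exact mul_left_cancel h
  obtain ⟨b, hb⟩ : ∃ b : K, b ∉ ({0, -1} : Finset K) := by
    have hlt : ({0, -1} : Finset K).card < Fintype.card K := by
      have : ({0, -1} : Finset K).card ≤ 2 := by
        apply le_trans (Finset.card_insert_le _ _); simp
      omega
    have : (({0, -1} : Finset K)ᶜ).Nonempty := by
      rw [← Finset.card_pos, Finset.card_compl]
      omega
    obtain ⟨b, hb⟩ := this
    exact ⟨b, by simpa using hb⟩
  simp only [Finset.mem_insert, Finset.mem_singleton, not_or] at hb
  obtain ⟨hb0, hb1⟩ := hb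
  have hb1' : 1 + b ≠ 0 := fun h => hb1 (eq_neg_of_add_eq_zero_right h)
  have hcnz : ∀ c : K, c ≠ 0 →
      Equiv.Perm.sign (Tperm i j hij c) = Equiv.Perm.sign (Tperm i j hij (1 : K)) := by
    intro c hc
    have := key c hc 1
    rw [mul_one] at this
    exact this.symm
  have hsq : Equiv.Perm.sign (Tperm i j hij (1 : K)) * Equiv.Perm.sign (Tperm i j hij (1 : K)) =
      Equiv.Perm.sign (Tperm i j hij (1 : K)) := by
    conv_rhs => rw [← hcnz _ hb1', Tperm_add, map_mul, hcnz b hb0]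
  have h1 : Equiv.Perm.sign (Tperm i j hij (1 : K)) = 1 :=
    mul_right_cancel (hsq.trans (one_mul _).symm)
  rcases eq_or_ne c 0 with rfl | hc
  · rw [Tperm_zero, map_one]
  · rw [hcnz c hc, h1]

end Aux

section Glue

set_option linter.unusedSectionVars false

variable {K : Type} [Field K] [Fintype K] [DecidableEq K] {n : ℕ}

/-- Tperm associated to a TransvectionStruct. -/
def TSperm (t : Matrix.TransvectionStruct (Fin n) K) : Equiv.Perm (Fin n → K) :=
  Tperm t.i t.j t.hij t.c

lemma listTperm_coe (L : List (Matrix.TransvectionStruct (Fin n) K)) (v : Fin n → K) :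
    ((L.map TSperm).prod : Equiv.Perm (Fin n → K)) v
      = ((L.map Matrix.TransvectionStruct.toMatrix).prod).mulVec v := by
  induction L generalizing v with
  | nil => simp
  | cons t L ih =>
    simp only [List.map_cons, List.prod_cons, Equiv.Perm.mul_apply]
    rw [ih, ← Matrix.mulVec_mulVec]
    rw [TSperm, Tperm_coe]
    rfl

lemma sign_listTperm (hcard : 3 ≤ Fintype.card K)
    (L : List (Matrix.TransvectionStruct (Fin n) K)) :
    Equiv.Perm.sign ((L.map TSperm).prod) = 1 := by
  rw [map_list_prod]
  apply List.prod_eq_one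
  intro x hx
  rw [List.map_map, List.mem_map] at hx
  obtain ⟨t, _, rfl⟩ := hx
  exact sign_Tperm hcard t.i t.j t.hij t.c

lemma sign_eq_one_of_mulVec (m : ℕ) (hm : 2 ≤ m) (hq : Fintype.card K = 2 ^ m)
    (M : Matrix (Fin n) (Fin n) K) (hM : IsUnit M.det)
    (τ : Equiv.Perm (Fin n → K)) (hτ : ∀ v, τ v = M.mulVec v) :
    Equiv.Perm.sign τ = 1 := by
  have hcard : 3 ≤ Fintype.card K := by
    rw [hq]
    calc 3 ≤ 2 ^ 2 := by norm_num
    _ ≤ 2 ^ m := Nat.pow_le_pow_right (by norm_num) hm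
  obtain ⟨L, L', D, hdecomp⟩ := Matrix.Pivot.exists_list_transvec_mul_diagonal_mul_list_transvec M
  have hD : ∀ i, D i ≠ 0 := by
    have hdet : M.det = ∏ i, D i := by
      rw [hdecomp]
      simp [Matrix.det_mul, Matrix.det_diagonal]
    intro i hi
    rw [hdet] at hM
    rw [isUnit_iff_ne_zero] at hM
    exact hM (Finset.prod_eq_zero (Finset.mem_univ i) hi)
  set u : Fin n → Kˣ := fun i => Units.mk0 (D i) (hD i) with hu
  have hdiag : Matrix.diagonal D = Matrix.diagonal (fun i => (u i : K)) := by
    simp [hu]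
  have hτeq : τ = (L.map TSperm).prod * (Dperm u * (L'.map TSperm).prod) := by
    ext v
    rw [hτ v, hdecomp, hdiag]
    simp only [Equiv.Perm.mul_apply]
    rw [listTperm_coe, Dperm_coe, listTperm_coe, Matrix.mulVec_mulVec, Matrix.mulVec_mulVec,
      mul_assoc]
  rw [hτeq, map_mul, map_mul, sign_listTperm hcard, sign_listTperm hcard,
    sign_Dperm m (by omega) hq, one_mul, mul_one]

end Glue

lemma eval_aeval' {K : Type} [CommSemiring K] {n : ℕ} (g : Fin n → MvPolynomial (Fin n) K)
    (p : MvPolynomial (Fin n) K) (v : Fin n → K) :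
    eval v (aeval g p) = eval (fun j => eval v (g j)) p := by
  rw [aeval_def, eval_eval₂, ← eval₂_id]
  congr 1
  ext c
  simp

/-- Over 𝔽_q, q = 2^m, m ≥ 2, every linearizable polynomial automorphism F = φ⁻¹ ∘ L ∘ φ
(L linear) induces an even permutation of 𝔽_qⁿ. -/
theorem stmt_18 (K : Type) [Field K] [Fintype K] [DecidableEq K] (m : ℕ) (hm : 2 ≤ m)
    (hq : Fintype.card K = 2 ^ m) (n : ℕ)
    (F φ φ' : Fin n → MvPolynomial (Fin n) K)
    (hφ : ∀ i, aeval φ' (φ i) = X i) (hφ' : ∀ i, aeval φ (φ' i) = X i)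
    (A : GL (Fin n) K)
    (hlin : ∀ i, F i =
      aeval (fun j => ∑ k, C ((A : Matrix (Fin n) (Fin n) K) j k) * φ k) (φ' i))
    (σ : Equiv.Perm (Fin n → K)) (hσ : ∀ v, σ v = fun i => eval v (F i)) :
    Equiv.Perm.sign σ = 1 := by
  set M := (A : Matrix (Fin n) (Fin n) K) with hM
  set e : (Fin n → K) → (Fin n → K) := fun v i => eval v (φ i) with he
  set e' : (Fin n → K) → (Fin n → K) := fun v i => eval v (φ' i) with he'
  have hee' : ∀ v, e (e' v) = v := by
    intro v; funext i
    calc e (e' v) i = eval (fun j => eval v (φ' j)) (φ i) := rfl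
    _ = eval v (aeval φ' (φ i)) := (eval_aeval' φ' (φ i) v).symm
    _ = v i := by rw [hφ i, eval_X]
  have he'e : ∀ v, e' (e v) = v := by
    intro v; funext i
    calc e' (e v) i = eval (fun j => eval v (φ j)) (φ' i) := rfl
    _ = eval v (aeval φ (φ' i)) := (eval_aeval' φ (φ' i) v).symm
    _ = v i := by rw [hφ' i, eval_X]
  set ψ : Equiv.Perm (Fin n → K) := ⟨e, e', he'e, hee'⟩ with hψ
  set τ : Equiv.Perm (Fin n → K) := ψ * σ * ψ⁻¹ with hτdef
  have hτ : ∀ v, τ v = M.mulVec v := by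
    intro v
    have h1 : τ v = e (σ (e' v)) := rfl
    have h2 : σ (e' v) = e' (M.mulVec v) := by
      rw [hσ (e' v)]
      funext j
      rw [hlin j, eval_aeval']
      have h3 : (fun k' => eval (e' v)
          ((fun j => ∑ k, C (M j k) * φ k) k')) = M.mulVec v := by
        funext k'
        simp only [map_sum, map_mul, eval_C]
        have h4 : ∀ k, eval (e' v) (φ k) = v k := by
          intro k
          have := congrFun (hee' v) k
          exact this
        simp only [h4]
        rfl
      rw [h3]
    rw [h1, h2, hee']
  have hdet : IsUnit M.det := A.isUnit.map (Matrix.detMonoidHom)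
  have hsign : Equiv.Perm.sign τ = 1 := sign_eq_one_of_mulVec m hm hq M hdet τ hτ
  have hστ : σ = ψ⁻¹ * τ * ψ := by
    rw [hτdef]
    group
  rw [hστ, map_mul, map_mul, hsign, mul_one, map_inv, inv_mul_cancel]
end
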